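/- arXiv:2205.04137 — 7 statements merged into one kernel-verified Lean document; each statement's English description precedes it below -/
import Mathlib

section
/- The function H̄ is strictly increasing on (0,1]. -/
private lemma key1 (a x : ℝ) (ha : 0 < a) (hx : 0 < x) (hne : x ≠ a) :
    a * (Real.log x - Real.log a) < x - a := by
  have h := Real.log_lt_sub_one_of_pos (x := x / a) (by positivity)
    (by simp [div_eq_one_iff_eq, hx.ne', ha.ne']; exact hne)
  rw [Real.log_div hx.ne' ha.ne'] at h
  have := mul_lt_mul_of_pos_left h ha
  have hxa : a * (x / a) = x := by field_simp
  nlinarith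

private lemma key2 (a x : ℝ) (ha : 0 < a) (hx : 0 < x) (hne : x ≠ a) :
    x - a < x * (Real.log x - Real.log a) := by
  have h := key1 x a hx ha (Ne.symm hne)
  nlinarith

private lemma hasDerivG (a x : ℝ) (hx : 0 < x) (hne : x ≠ a) :
    HasDerivAt (fun t => t * (Real.log t - Real.log a) / (t - a))
      ((x - a - a * (Real.log x - Real.log a)) / (x - a)^2) x := by
  have h1 : HasDerivAt (fun t : ℝ => t * (Real.log t - Real.log a))
      (1 * (Real.log x - Real.log a) + x * x⁻¹) x :=
    (hasDerivAt_id x).mul ((Real.hasDerivAt_log hx.ne').sub_const _)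
  have h2 : HasDerivAt (fun t : ℝ => t - a) 1 x := (hasDerivAt_id x).sub_const a
  have h := h1.div h2 (sub_ne_zero.mpr hne)
  refine h.congr_deriv ?_
  rw [mul_inv_cancel₀ hx.ne']
  field_simp
  ring

private lemma derivG_pos (a x : ℝ) (ha : 0 < a) (hx : 0 < x) (hne : x ≠ a) :
    0 < deriv (fun t => t * (Real.log t - Real.log a) / (t - a)) x := by
  rw [(hasDerivG a x hx hne).deriv]
  have h := key1 a x ha hx hne
  have h2 : (0:ℝ) < (x - a)^2 := by
    have : x - a ≠ 0 := sub_ne_zero.mpr hne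
    positivity
  exact div_pos (by linarith) h2

private lemma G_mono_lo (a : ℝ) (ha : 0 < a) :
    StrictMonoOn (fun t => t * (Real.log t - Real.log a) / (t - a)) (Set.Ioo 0 a) := by
  apply strictMonoOn_of_deriv_pos (convex_Ioo 0 a)
  · intro x hx
    exact (hasDerivG a x hx.1 (ne_of_lt hx.2)).continuousAt.continuousWithinAt
  · intro x hx
    rw [interior_Ioo] at hx
    exact derivG_pos a x ha hx.1 (ne_of_lt hx.2)

private lemma G_mono_hi (a : ℝ) (ha : 0 < a) :
    StrictMonoOn (fun t => t * (Real.log t - Real.log a) / (t - a)) (Set.Ioc a 1) := by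
  apply strictMonoOn_of_deriv_pos (convex_Ioc a 1)
  · intro x hx
    exact (hasDerivG a x (ha.trans hx.1) (ne_of_gt hx.1)).continuousAt.continuousWithinAt
  · intro x hx
    rw [interior_Ioc] at hx
    exact derivG_pos a x ha (ha.trans hx.1) (ne_of_gt hx.1)

private lemma G_lt_one (a x : ℝ) (ha : 0 < a) (hx : 0 < x) (hxa : x < a) :
    x * (Real.log x - Real.log a) / (x - a) < 1 := by
  rw [div_lt_iff_of_neg (by linarith : x - a < 0)]
  have := key2 a x ha hx (ne_of_lt hxa)
  linarith

private lemma one_lt_G (a x : ℝ) (ha : 0 < a) (hxa : a < x) :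
    1 < x * (Real.log x - Real.log a) / (x - a) := by
  rw [lt_div_iff₀ (by linarith : 0 < x - a)]
  have := key2 a x ha (ha.trans hxa) (ne_of_gt hxa)
  linarith

/-- H̄ is strictly increasing on (0,1]. -/
theorem Hbar_strictMonoOn (μ a : ℝ) (hμ : μ ∈ Set.Ioo (0:ℝ) 1)
    (ha : a ∈ Set.Ioo (0:ℝ) 1) (haμ : a * (1 - Real.log a) = μ)
    (H : ℝ → ℝ)
    (hH : ∀ x : ℝ, H x =
      if x = 0 then 0
      else if x = a then -(1 - a) / Real.log a
      else -(x * (1 - a) * (Real.log x - Real.log a)) / ((x - a) * Real.log a)) :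
    StrictMonoOn H (Set.Ioc (0:ℝ) 1) := by
  obtain ⟨ha0, ha1⟩ := ha
  have hla : Real.log a < 0 := Real.log_neg ha0 ha1
  set c : ℝ := -(1 - a) / Real.log a with hc_def
  have hc : 0 < c := div_pos_of_neg_of_neg (by linarith) hla
  set G : ℝ → ℝ := fun t => t * (Real.log t - Real.log a) / (t - a) with hG_def
  have hHG : ∀ x : ℝ, 0 < x → x ≠ a → H x = c * G x := by
    intro x hx hne
    rw [hH x, if_neg hx.ne', if_neg hne]
    have hxa : x - a ≠ 0 := sub_ne_zero.mpr hne
    simp only [hG_def, hc_def]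
    field_simp
  have hHa : H a = c := by rw [hH a, if_neg ha0.ne', if_pos rfl]
  intro x hx y hy hxy
  rcases lt_trichotomy x a with hxlt | hxeq | hxgt
  · have hHx : H x = c * G x := hHG x hx.1 (ne_of_lt hxlt)
    have hGx1 : G x < 1 := G_lt_one a x ha0 hx.1 hxlt
    rcases lt_trichotomy y a with hylt | hyeq | hygt
    · rw [hHx, hHG y (hx.1.trans hxy) (ne_of_lt hylt)]
      exact (mul_lt_mul_iff_right₀ hc).mpr
        (G_mono_lo a ha0 ⟨hx.1, hxlt⟩ ⟨hx.1.trans hxy, hylt⟩ hxy)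
    · rw [hHx, hyeq, hHa]
      nlinarith
    · rw [hHx, hHG y (hx.1.trans hxy) (ne_of_gt hygt)]
      have hGy1 : 1 < G y := one_lt_G a y ha0 hygt
      nlinarith
  · have hygt : a < y := hxeq ▸ hxy
    rw [hxeq, hHa, hHG y (hx.1.trans hxy) (ne_of_gt hygt)]
    have hGy1 : 1 < G y := one_lt_G a y ha0 hygt
    nlinarith
  · have hygt : a < y := hxgt.trans hxy
    rw [hHG x hx.1 (ne_of_gt hxgt), hHG y (hx.1.trans hxy) (ne_of_gt hygt)]
    exact (mul_lt_mul_iff_right₀ hc).mpr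
      (G_mono_hi a ha0 ⟨hxgt, hx.2⟩ ⟨hygt, hy.2⟩ hxy)
end

section
/- For every x ∈ (0,1] with x ≠ a, the derivative of H̄ at x equals -(1-a)(x - a·ln x - μ)/((x-a)² · ln a), and this derivative is strictly positive. -/
/-- For x ∈ (0,1], x ≠ a, the derivative of H̄ at x equals
-(1-a)(x - a·ln x - μ)/((x-a)²·ln a), and it is strictly positive. -/
theorem Hbar_hasDerivAt (μ a : ℝ) (hμ : μ ∈ Set.Ioo (0:ℝ) 1)
    (ha : a ∈ Set.Ioo (0:ℝ) 1) (haμ : a * (1 - Real.log a) = μ)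
    (H : ℝ → ℝ)
    (hH : ∀ x : ℝ, H x =
      if x = 0 then 0
      else if x = a then -(1 - a) / Real.log a
      else -(x * (1 - a) * (Real.log x - Real.log a)) / ((x - a) * Real.log a)) :
    ∀ x ∈ Set.Ioc (0:ℝ) 1, x ≠ a →
      HasDerivAt H
        (-((1 - a) * (x - a * Real.log x - μ)) / ((x - a) ^ 2 * Real.log a)) x ∧
      0 < -((1 - a) * (x - a * Real.log x - μ)) / ((x - a) ^ 2 * Real.log a) := by
  obtain ⟨ha0, ha1⟩ := ha
  have hla : Real.log a < 0 := Real.log_neg ha0 ha1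
  have hla0 : Real.log a ≠ 0 := ne_of_lt hla
  rintro x ⟨hx0, hx1⟩ hxa
  have hxa' : x - a ≠ 0 := sub_ne_zero.mpr hxa
  -- Positivity of x - a * log x - μ
  have hnum : 0 < x - a * Real.log x - μ := by
    have hxdiv : x / a ≠ 1 := by
      intro h
      exact hxa (by field_simp at h; linarith)
    have hlog : Real.log (x / a) < x / a - 1 :=
      Real.log_lt_sub_one_of_pos (div_pos hx0 ha0) hxdiv
    have hld : Real.log (x / a) = Real.log x - Real.log a :=
      Real.log_div (ne_of_gt hx0) (ne_of_gt ha0)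
    rw [hld] at hlog
    have := mul_lt_mul_of_pos_left hlog ha0
    rw [mul_sub, mul_sub, mul_div_cancel₀ _ (ne_of_gt ha0)] at this
    nlinarith
  -- positivity of the derivative value
  have hpos : 0 < -((1 - a) * (x - a * Real.log x - μ)) / ((x - a) ^ 2 * Real.log a) := by
    apply div_pos_of_neg_of_neg
    · have : 0 < (1 - a) * (x - a * Real.log x - μ) :=
        mul_pos (by linarith) hnum
      linarith
    · exact mul_neg_of_pos_of_neg (by positivity) hla
  refine ⟨?_, hpos⟩
  -- the smooth formula
  set f : ℝ → ℝ := fun y =>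
    -(y * (1 - a) * (Real.log y - Real.log a)) / ((y - a) * Real.log a) with hf
  have hderiv : HasDerivAt f
      (-((1 - a) * (x - a * Real.log x - μ)) / ((x - a) ^ 2 * Real.log a)) x := by
    have hu : HasDerivAt (fun y => -(y * (1 - a) * (Real.log y - Real.log a)))
        (-((1 - a) * (Real.log x - Real.log a) + x * (1 - a) * (1/x))) x := by
      have h1 : HasDerivAt (fun y => y * (1 - a)) (1 - a) x := by
        simpa using (hasDerivAt_id x).mul_const (1 - a)
      have h2 : HasDerivAt (fun y => Real.log y - Real.log a) (1/x) x := by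
        simpa [one_div] using (Real.hasDerivAt_log (ne_of_gt hx0)).sub_const (Real.log a)
      simpa [Pi.neg_def, Pi.mul_def, mul_comm, mul_assoc, mul_left_comm] using (h1.mul h2).neg
    have hv : HasDerivAt (fun y => (y - a) * Real.log a) (Real.log a) x := by
      simpa using ((hasDerivAt_id x).sub_const a).mul_const (Real.log a)
    have hv0 : (x - a) * Real.log a ≠ 0 := mul_ne_zero hxa' hla0
    have := hu.div hv hv0
    refine this.congr_deriv ?_
    have hμ' : μ = a - a * Real.log a := by linarith [haμ]
    rw [hμ']
    field_simp
    ring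
  -- H agrees with f near x
  have hne0 : ∀ᶠ y in nhds x, y ≠ 0 := eventually_ne_nhds (ne_of_gt hx0)
  have hnea : ∀ᶠ y in nhds x, y ≠ a := eventually_ne_nhds hxa
  have heq : f =ᶠ[nhds x] H := by
    filter_upwards [hne0, hnea] with y hy0 hya
    rw [hH y, if_neg hy0, if_neg hya]
  exact hderiv.congr_of_eventuallyEq heq.symm
end

section
/- The limit of H̄'(x) as x → a equals -(1-a)/(2a·ln a), which is strictly positive. -/
open Filter Real

/-- H̄'(x) → -(1-a)/(2a·ln a) as x → a, and this limit is strictly positive,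
where H̄'(x) = -(1-a)(x - a·ln x - μ)/((x-a)²·ln a) for x ≠ a. -/
theorem Hbar_deriv_tendsto_at_a (μ a : ℝ) (hμ : μ ∈ Set.Ioo (0:ℝ) 1)
    (ha : a ∈ Set.Ioo (0:ℝ) 1) (haμ : a * (1 - Real.log a) = μ) :
    Filter.Tendsto
      (fun x : ℝ =>
        -((1 - a) * (x - a * Real.log x - μ)) / ((x - a) ^ 2 * Real.log a))
      (nhdsWithin a {a}ᶜ) (nhds (-(1 - a) / (2 * a * Real.log a))) ∧
    0 < -(1 - a) / (2 * a * Real.log a) := by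
  obtain ⟨ha0, ha1⟩ := ha
  have hlog : Real.log a < 0 := Real.log_neg ha0 ha1
  have hlogne : Real.log a ≠ 0 := ne_of_lt hlog
  -- eventually x > 0 and x ≠ a on the punctured neighbourhood
  have hpos : ∀ᶠ x in nhdsWithin a {a}ᶜ, 0 < x ∧ x ≠ a := by
    filter_upwards [nhdsWithin_le_nhds (eventually_gt_nhds ha0),
      self_mem_nhdsWithin] with x hx hx'
    exact ⟨hx, hx'⟩
  -- L'Hôpital for f(x) = x - a log x - μ, g(x) = (x-a)^2
  have hlh : Tendsto (fun x : ℝ => (x - a * Real.log x - μ) / (x - a) ^ 2)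
      (nhdsWithin a {a}ᶜ) (nhds (1 / (2 * a))) := by
    apply HasDerivAt.lhopital_zero_nhdsNE
      (f' := fun x => 1 - a / x) (g' := fun x => 2 * (x - a))
    · filter_upwards [hpos] with x hx
      have h1 : HasDerivAt (fun x : ℝ => x - a * Real.log x - μ)
          (1 - a * x⁻¹) x :=
        ((hasDerivAt_id x).sub ((Real.hasDerivAt_log hx.1.ne').const_mul a)).sub_const μ
      simpa [div_eq_mul_inv] using h1
    · filter_upwards with x
      have : HasDerivAt (fun x : ℝ => (x - a) ^ 2) (2 * (x - a) ^ (2 - 1) * 1) x := by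
        exact ((hasDerivAt_id x).sub_const a).pow 2
      simpa using this
    · filter_upwards [hpos] with x hx
      have : x - a ≠ 0 := sub_ne_zero.mpr hx.2
      positivity
    · have hca : ContinuousAt (fun x : ℝ => x - a * Real.log x - μ) a :=
        (continuousAt_id.sub
          (continuousAt_const.mul (Real.continuousAt_log ha0.ne'))).sub continuousAt_const
      have h0 : a - a * Real.log a - μ = 0 := by rw [← haμ]; ring
      have ht := hca.tendsto.mono_left (nhdsWithin_le_nhds (s := {a}ᶜ))
      simpa [h0] using ht
    · have hca : ContinuousAt (fun x : ℝ => (x - a) ^ 2) a :=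
        (continuousAt_id.sub continuousAt_const).pow 2
      have ht := hca.tendsto.mono_left (nhdsWithin_le_nhds (s := {a}ᶜ))
      simpa using ht
    · -- f'/g' = 1/(2x) eventually
      have heq : ∀ᶠ x in nhdsWithin a {a}ᶜ,
          1 / (2 * x) = (1 - a / x) / (2 * (x - a)) := by
        filter_upwards [hpos] with x hx
        have hxne : x ≠ 0 := hx.1.ne'
        have hxa : x - a ≠ 0 := sub_ne_zero.mpr hx.2
        field_simp
      refine Tendsto.congr' heq ?_
      have : Tendsto (fun x : ℝ => 1 / (2 * x)) (nhds a) (nhds (1 / (2 * a))) := by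
        apply Tendsto.div tendsto_const_nhds
        · exact (continuousAt_const.mul continuousAt_id).tendsto
        · positivity
      exact this.mono_left nhdsWithin_le_nhds
  constructor
  · have heq : ∀ᶠ x in nhdsWithin a {a}ᶜ,
        (-(1 - a) / Real.log a) * ((x - a * Real.log x - μ) / (x - a) ^ 2)
          = -((1 - a) * (x - a * Real.log x - μ)) / ((x - a) ^ 2 * Real.log a) := by
      filter_upwards [hpos] with x hx
      have hxa : x - a ≠ 0 := sub_ne_zero.mpr hx.2
      field_simp
    have h := (hlh.const_mul (-(1 - a) / Real.log a)).congr' heq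
    have hval : (-(1 - a) / Real.log a) * (1 / (2 * a)) = -(1 - a) / (2 * a * Real.log a) := by
      rw [div_mul_div_comm]
      ring
    rwa [hval] at h
  · apply div_pos_of_neg_of_neg
    · linarith
    · have : 0 < 2 * a := by linarith
      exact mul_neg_of_pos_of_neg this hlog
end

section
/- For any x ∈ (0,1] with x ≠ a, H̄(x) - x·H̄'(x) = x·(H̄(x) + (1-a)/ln a)/(x - a), and this quantity is strictly positive. -/
/-- For any x ∈ (0,1] with x ≠ a,
H̄(x) - x·H̄'(x) = x·(H̄(x) + (1-a)/ln a)/(x - a), and this is strictly positive. -/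
theorem Hbar_virtual_positive (μ a : ℝ) (hμ : μ ∈ Set.Ioo (0:ℝ) 1)
    (ha : a ∈ Set.Ioo (0:ℝ) 1) (haμ : a * (1 - Real.log a) = μ)
    (H H' : ℝ → ℝ)
    (hH : ∀ x : ℝ, x ≠ 0 → x ≠ a →
      H x = -(x * (1 - a) * (Real.log x - Real.log a)) / ((x - a) * Real.log a))
    (hHa : H a = -(1 - a) / Real.log a)
    (hH' : ∀ x : ℝ, x ≠ a →
      H' x = -((1 - a) * (x - a * Real.log x - μ)) / ((x - a) ^ 2 * Real.log a)) :
    ∀ x ∈ Set.Ioc (0:ℝ) 1, x ≠ a →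
      H x - x * H' x = x * (H x + (1 - a) / Real.log a) / (x - a) ∧
      0 < H x - x * H' x := by
  obtain ⟨ha0, ha1⟩ := ha
  intro x hx hxa
  obtain ⟨hx0, hx1⟩ := hx
  have hL : Real.log a < 0 := Real.log_neg ha0 ha1
  have hLne : Real.log a ≠ 0 := ne_of_lt hL
  have hxane : x - a ≠ 0 := sub_ne_zero.mpr hxa
  have hx0' : x ≠ 0 := ne_of_gt hx0
  rw [hH x hx0' hxa, hH' x hxa, ← haμ]
  have hf : 0 < x * Real.log x - x * Real.log a - x + a := by
    have hne : a / x ≠ 1 := by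
      intro h
      rw [div_eq_one_iff_eq hx0'] at h
      exact hxa h.symm
    have h := Real.log_lt_sub_one_of_pos (div_pos ha0 hx0) hne
    rw [Real.log_div (ne_of_gt ha0) hx0'] at h
    have h2 := (mul_lt_mul_iff_right₀ hx0).mpr h
    have h3 : x * (a / x - 1) = a - x := by field_simp
    rw [h3, mul_sub] at h2
    linarith
  constructor
  · field_simp
    ring
  · have key : -(x * (1 - a) * (Real.log x - Real.log a)) / ((x - a) * Real.log a)
        - x * (-((1 - a) * (x - a * Real.log x - a * (1 - Real.log a))) / ((x - a) ^ 2 * Real.log a))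
        = (1 - a) * x * (x * Real.log x - x * Real.log a - x + a)
          / (-(Real.log a) * (x - a) ^ 2) := by
      field_simp
      ring
    rw [key]
    apply div_pos
    · exact mul_pos (mul_pos (by linarith) hx0) hf
    · exact mul_pos (neg_pos.mpr hL) (pow_two_pos_of_ne_zero hxane)
end

section
/- Fix λ = -2(1-a)/ln(a). For each x ∈ (a,1), the quadratic function g ↦ (H̄(x) - x·H̄'(x))·g² - 2(H̄(x) + (1-a)/ln a)·g + H̄(x) + x·H̄'(x) + 2(1-a)/ln a over g ∈ [0,1] is uniquely minimized at g = 1 - a/x. -/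
/-- With λ = -2(1-a)/ln a, for each x ∈ (a,1) the quadratic
g ↦ (H̄(x) - x·H̄'(x))·g² - 2·(H̄(x) + (1-a)/ln a)·g + H̄(x) + x·H̄'(x) + 2(1-a)/ln a
over g ∈ [0,1] is uniquely minimized at g = 1 - a/x. -/
theorem quadratic_min_above_a (μ a : ℝ) (hμ : μ ∈ Set.Ioo (0:ℝ) 1)
    (ha : a ∈ Set.Ioo (0:ℝ) 1) (haμ : a * (1 - Real.log a) = μ)
    (H H' : ℝ → ℝ)
    (hH : ∀ x : ℝ, x ≠ 0 → x ≠ a →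
      H x = -(x * (1 - a) * (Real.log x - Real.log a)) / ((x - a) * Real.log a))
    (hH' : ∀ x : ℝ, x ≠ a →
      H' x = -((1 - a) * (x - a * Real.log x - μ)) / ((x - a) ^ 2 * Real.log a)) :
    ∀ x ∈ Set.Ioo a 1, ∀ g ∈ Set.Icc (0:ℝ) 1, g ≠ 1 - a / x →
      (H x - x * H' x) * (1 - a / x) ^ 2
          - 2 * (H x + (1 - a) / Real.log a) * (1 - a / x)
          + H x + x * H' x + 2 * (1 - a) / Real.log a
        < (H x - x * H' x) * g ^ 2
          - 2 * (H x + (1 - a) / Real.log a) * g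
          + H x + x * H' x + 2 * (1 - a) / Real.log a := by
  obtain ⟨ha0, ha1⟩ := ha
  intro x hx g hg hgne
  obtain ⟨hax, hx1⟩ := hx
  have hx0 : (0:ℝ) < x := lt_trans ha0 hax
  have hx0' : x ≠ 0 := ne_of_gt hx0
  have hxa : x ≠ a := ne_of_gt hax
  have hxa' : x - a ≠ 0 := sub_ne_zero.mpr hxa
  have hxa0 : 0 < x - a := sub_pos.mpr hax
  have hL : Real.log a < 0 := Real.log_neg ha0 ha1
  have hL' : Real.log a ≠ 0 := ne_of_lt hL
  have hμeq : μ = a - a * Real.log a := by rw [← haμ]; ring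
  -- D > 0
  have hlog : Real.log (a / x) < a / x - 1 :=
    Real.log_lt_sub_one_of_pos (div_pos ha0 hx0) (by
      intro h
      exact hxa ((div_eq_one_iff_eq hx0').mp h).symm)
  have hlogdiv : Real.log (a / x) = Real.log a - Real.log x :=
    Real.log_div (ne_of_gt ha0) hx0'
  have hdivlt : a / x - 1 = (a - x) / x := by field_simp
  have hD : 0 < x * (Real.log x - Real.log a) - (x - a) := by
    rw [hlogdiv, hdivlt] at hlog
    have h2 := mul_lt_mul_of_pos_right hlog hx0
    rw [div_mul_cancel₀ _ hx0'] at h2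
    nlinarith [h2]
  -- A positivity
  have hA : (H x - x * H' x) * (Real.log a * (x - a) ^ 2)
      = -((1 - a) * x * (x * (Real.log x - Real.log a) - (x - a))) := by
    rw [hH x hx0' hxa, hH' x hxa, hμeq]
    field_simp
    ring
  have hMneg : -((1 - a) * x * (x * (Real.log x - Real.log a) - (x - a))) < 0 := by
    have h1a : 0 < 1 - a := by linarith
    nlinarith [mul_pos (mul_pos h1a hx0) hD]
  have hNneg : Real.log a * (x - a) ^ 2 < 0 :=
    mul_neg_of_neg_of_pos hL (by positivity)
  have hApos : 0 < H x - x * H' x := by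
    nlinarith [hA, hMneg, hNneg]
  -- key vertex identity: B = A * (1 - a/x)
  have key : H x + (1 - a) / Real.log a = (H x - x * H' x) * (1 - a / x) := by
    rw [hH x hx0' hxa, hH' x hxa, hμeq]
    field_simp
    ring
  have hsq : 0 < (g - (1 - a / x)) ^ 2 := by
    have := sub_ne_zero.mpr hgne
    positivity
  rw [key]
  nlinarith [mul_pos hApos hsq]
end

section
/- For any CDF G on [0,1] with mean μ, the revenue functional L(G) = ∫₀¹ {(1 - G(x)²)(x·H̄'(x) + H̄(x)) - 2·H̄(x)·G(x)(1-G(x))} dx satisfies L(G) ≥ L(Ḡ) = 2a - a², where Ḡ is the equal-revenue distribution with parameter a. -/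
open Real MeasureTheory intervalIntegral Set Filter

noncomputable def Hb (a x : ℝ) : ℝ :=
  -(x * (1 - a) * (Real.log x - Real.log a)) / ((x - a) * Real.log a)

noncomputable def Hb' (a μ x : ℝ) : ℝ :=
  -((1 - a) * (x - a * Real.log x - μ)) / ((x - a) ^ 2 * Real.log a)

noncomputable def phiER (a μ t x : ℝ) : ℝ :=
  (1 - t ^ 2) * (x * Hb' a μ x + Hb a x) - 2 * Hb a x * t * (1 - t)

/-- log x - log a ≤ (x-a)/a -/
lemma log_sub_log_le {a x : ℝ} (ha : 0 < a) (hx : 0 < x) :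
    Real.log x - Real.log a ≤ (x - a) / a := by
  rw [← Real.log_div hx.ne' ha.ne']
  have h := Real.log_le_sub_one_of_pos (div_pos hx ha)
  calc Real.log (x/a) ≤ x/a - 1 := h
    _ = (x - a)/a := by field_simp

/-- (x-a)/x ≤ log x - log a -/
lemma le_log_sub_log {a x : ℝ} (ha : 0 < a) (hx : 0 < x) :
    (x - a) / x ≤ Real.log x - Real.log a := by
  have h := log_sub_log_le hx ha
  have hx' := hx.ne'
  have h2 : (x - a)/x = -((a - x)/x) := by ring
  linarith [h]

noncomputable def cc (a : ℝ) : ℝ := (a - 1) / Real.log a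

section basic
variable {a x μ : ℝ}

lemma la_neg (ha0 : 0 < a) (ha1 : a < 1) : Real.log a < 0 := Real.log_neg ha0 ha1

lemma cc_pos (ha0 : 0 < a) (ha1 : a < 1) : 0 < cc a := div_pos_of_neg_of_neg (by linarith) (la_neg ha0 ha1)

/-- g(x) = (x-a) - a (log x - log a) ≥ 0 -/
lemma g_nonneg (ha0 : 0 < a) (hx : 0 < x) : 0 ≤ x - a - a * (Real.log x - Real.log a) := by
  have h := log_sub_log_le ha0 hx
  have := mul_le_mul_of_nonneg_left h ha0.le
  have ha' : a * ((x - a)/a) = x - a := by field_simp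
  nlinarith

/-- x g(x) ≤ (x-a)² -/
lemma xg_le (ha0 : 0 < a) (hx : 0 < x) : x * (x - a - a * (Real.log x - Real.log a)) ≤ (x - a) ^ 2 := by
  have h := le_log_sub_log ha0 hx
  have := mul_le_mul_of_nonneg_left h ha0.le
  have ha' : x * (a * ((x - a)/x)) = a * (x - a) := by field_simp
  nlinarith

/-- ψ(x) = x(log x - log a) - x + a ≥ 0 -/
lemma psi_nonneg (ha0 : 0 < a) (hx : 0 < x) : 0 ≤ x * (Real.log x - Real.log a) - x + a := by
  have h := le_log_sub_log ha0 hx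
  have := mul_le_mul_of_nonneg_left h hx.le
  have hx' : x * ((x - a)/x) = x - a := by field_simp
  nlinarith

lemma cc_eq {a : ℝ} (hla : Real.log a ≠ 0) : cc a = (1 - a) / (-Real.log a) := by
  rw [cc, div_eq_div_iff hla (neg_ne_zero.2 hla)]; ring

lemma sq_pos' {x a : ℝ} (hxa : x - a ≠ 0) : 0 < (x - a) ^ 2 :=
  lt_of_le_of_ne (sq_nonneg _) (Ne.symm (pow_ne_zero 2 hxa))

lemma prod3_nonneg {x y z : ℝ} (a : 0 ≤ x) (b : 0 ≤ y) (c : 0 ≤ z) : 0 ≤ x * y * z :=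
  mul_nonneg (mul_nonneg a b) c

lemma Hb_nonneg (ha0 : 0 < a) (ha1 : a < 1) (hx : 0 < x) : 0 ≤ Hb a x := by
  have hl := la_neg ha0 ha1
  rcases lt_trichotomy x a with h | h | h
  · have hΔ : Real.log x - Real.log a < 0 := by
      have := Real.log_lt_log hx h; linarith
    rw [Hb]
    apply div_nonneg
    · nlinarith [prod3_nonneg hx.le (by linarith : (0:ℝ) ≤ 1 - a)
        (by linarith : (0:ℝ) ≤ -(Real.log x - Real.log a))]
    · nlinarith
  · simp [Hb, h]
  · have hΔ : 0 < Real.log x - Real.log a := by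
      have := Real.log_lt_log ha0 h; linarith
    rw [Hb]
    apply div_nonneg_of_nonpos
    · nlinarith [prod3_nonneg hx.le (by linarith : (0:ℝ) ≤ 1 - a) hΔ.le]
    · nlinarith

/-- on (0,a): Hb ≤ c -/
lemma Hb_le_cc (ha0 : 0 < a) (ha1 : a < 1) (hx : 0 < x) (hxa : x < a) : Hb a x ≤ cc a := by
  have hl := la_neg ha0 ha1
  have hψ := psi_nonneg ha0 hx
  have e : Hb a x = (x * (1 - a) * (Real.log a - Real.log x)) / ((a - x) * (-Real.log a)) := by
    rw [Hb, div_eq_div_iff (by nlinarith) (by nlinarith)]; ring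
  rw [e, cc_eq hl.ne, div_le_div_iff₀ (by nlinarith) (by linarith)]
  have k : x * (Real.log a - Real.log x) ≤ a - x := by nlinarith
  nlinarith [mul_le_mul_of_nonneg_right k
    (mul_nonneg (by linarith : (0:ℝ) ≤ 1 - a) (by linarith : (0:ℝ) ≤ -Real.log a))]

/-- on (0,1]: Hb ≤ c/a -/
lemma Hb_le_cc_div (ha0 : 0 < a) (ha1 : a < 1) (hx : 0 < x) (hx1 : x ≤ 1) :
    Hb a x ≤ cc a / a := by
  have hl := la_neg ha0 ha1
  have hc := cc_pos ha0 ha1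
  rcases lt_trichotomy x a with h | h | h
  · calc Hb a x ≤ cc a := Hb_le_cc ha0 ha1 hx h
      _ ≤ cc a / a := by rw [le_div_iff₀ ha0]; nlinarith
  · subst h
    calc Hb x x = 0 := by simp [Hb]
      _ ≤ cc x / x := by positivity
  · have hΔ := log_sub_log_le ha0 hx
    have hΔ0 : 0 < Real.log x - Real.log a := by
      have := Real.log_lt_log ha0 h; linarith
    have e : Hb a x = (x * (1 - a) * (Real.log x - Real.log a)) / ((x - a) * (-Real.log a)) := by
      rw [Hb, div_eq_div_iff (by nlinarith) (by nlinarith)]; ring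
    rw [e, cc_eq hl.ne, div_div, div_le_div_iff₀ (by nlinarith) (by nlinarith)]
    have key : a * (x * (Real.log x - Real.log a)) ≤ x * (x - a) := by
      have h1 : x * (Real.log x - Real.log a) ≤ x * ((x - a)/a) :=
        mul_le_mul_of_nonneg_left hΔ hx.le
      have h2 : a * (x * ((x - a)/a)) = x * (x - a) := by field_simp
      nlinarith
    have k2 : x * (x - a) ≤ x - a := by nlinarith
    nlinarith [mul_le_mul_of_nonneg_right (key.trans k2)
      (mul_nonneg (by linarith : (0:ℝ) ≤ 1 - a) (by linarith : (0:ℝ) ≤ -Real.log a))]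

lemma xHb'_eq (ha0 : 0 < a) (ha1 : a < 1) (hxa : x - a ≠ 0) (hμ : μ = a - a * Real.log a) :
    x * Hb' a μ x = (x * (1 - a) * (x - a - a * (Real.log x - Real.log a))) /
      ((x - a) ^ 2 * (-Real.log a)) := by
  have hl := la_neg ha0 ha1
  have h2 := sq_pos' hxa
  rw [Hb', hμ, ← mul_div_assoc,
    div_eq_div_iff (mul_ne_zero (pow_ne_zero 2 hxa) hl.ne) (by nlinarith)]
  ring

lemma xHb'_nonneg (ha0 : 0 < a) (ha1 : a < 1) (hx : 0 < x) (hxa : x - a ≠ 0)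
    (hμ : μ = a - a * Real.log a) : 0 ≤ x * Hb' a μ x := by
  have hl := la_neg ha0 ha1
  have hg := g_nonneg ha0 hx
  have h2 := sq_pos' hxa
  rw [xHb'_eq ha0 ha1 hxa hμ]
  apply div_nonneg
  · exact prod3_nonneg hx.le (by linarith) hg
  · nlinarith

lemma xHb'_le (ha0 : 0 < a) (ha1 : a < 1) (hx : 0 < x) (hxa : x - a ≠ 0)
    (hμ : μ = a - a * Real.log a) : x * Hb' a μ x ≤ cc a := by
  have hl := la_neg ha0 ha1
  have hg := xg_le ha0 hx
  have h2 := sq_pos' hxa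
  rw [xHb'_eq ha0 ha1 hxa hμ, cc_eq hl.ne,
    div_le_div_iff₀ (by nlinarith) (by linarith)]
  nlinarith [mul_le_mul_of_nonneg_right hg
    (mul_nonneg (by linarith : (0:ℝ) ≤ 1 - a) (by linarith : (0:ℝ) ≤ -Real.log a))]

/-- A = Hb - x Hb' -/
lemma A_eq (ha0 : 0 < a) (ha1 : a < 1) (hx : x ≠ 0) (hxa : x - a ≠ 0)
    (hμ : μ = a - a * Real.log a) : Hb a x - x * Hb' a μ x =
      (x * (1 - a) * (x * (Real.log x - Real.log a) - x + a)) /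
      ((x - a) ^ 2 * (-Real.log a)) := by
  have hl := la_neg ha0 ha1
  have h2 := sq_pos' hxa
  have hD1 : (x - a) * Real.log a ≠ 0 := mul_ne_zero hxa hl.ne
  have hD2 : (x - a) ^ 2 * Real.log a ≠ 0 := mul_ne_zero (pow_ne_zero 2 hxa) hl.ne
  rw [Hb', Hb, hμ, ← mul_div_assoc, div_sub_div _ _ hD1 hD2,
    div_eq_div_iff (mul_ne_zero hD1 hD2) (by nlinarith)]
  ring

lemma A_nonneg (ha0 : 0 < a) (ha1 : a < 1) (hx : 0 < x) (hxa : x - a ≠ 0)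
    (hμ : μ = a - a * Real.log a) : 0 ≤ Hb a x - x * Hb' a μ x := by
  have hl := la_neg ha0 ha1
  have hψ := psi_nonneg ha0 hx
  have h2 := sq_pos' hxa
  rw [A_eq ha0 ha1 hx.ne' hxa hμ]
  apply div_nonneg
  · exact prod3_nonneg hx.le (by linarith) (by linarith)
  · nlinarith

end basic

section pointwise
variable {a x μ t : ℝ}

lemma pointwise_low (ha0 : 0 < a) (ha1 : a < 1) (hx : 0 < x) (hxa : x < a)
    (hμ : μ = a - a * Real.log a) (ht0 : 0 ≤ t) :
    0 ≤ phiER a μ t x - phiER a μ 0 x + 2 * cc a * (t - 0) := by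
  have hA := A_nonneg ha0 ha1 hx (by linarith : x - a ≠ 0) hμ
  have hHb := Hb_le_cc ha0 ha1 hx hxa
  have id1 : phiER a μ t x - phiER a μ 0 x =
      (Hb a x - x * Hb' a μ x) * t ^ 2 - 2 * Hb a x * t := by
    unfold phiER; ring
  nlinarith [mul_nonneg hA (sq_nonneg t), mul_nonneg ht0 (sub_nonneg.2 hHb)]

lemma pointwise_high_eq (ha0 : 0 < a) (ha1 : a < 1) (hxa : a < x)
    (hμ : μ = a - a * Real.log a) (t : ℝ) :
    phiER a μ t x - phiER a μ ((x - a)/x) x + 2 * cc a * (t - (x - a)/x) =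
      (Hb a x - x * Hb' a μ x) * (t - (x - a)/x) ^ 2 := by
  have hl := la_neg ha0 ha1
  have hx : (0:ℝ) < x := lt_trans ha0 hxa
  have hx0 : x ≠ 0 := hx.ne'
  have hxa0 : x - a ≠ 0 := by intro h; nlinarith
  have hla : Real.log a ≠ 0 := hl.ne
  subst hμ
  unfold phiER Hb Hb' cc
  field_simp
  ring

lemma pointwise_high (ha0 : 0 < a) (ha1 : a < 1) (hxa : a < x)
    (hμ : μ = a - a * Real.log a) (t : ℝ) :
    0 ≤ phiER a μ t x - phiER a μ ((x - a)/x) x + 2 * cc a * (t - (x - a)/x) := by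
  rw [pointwise_high_eq ha0 ha1 hxa hμ t]
  have hx : (0:ℝ) < x := lt_trans ha0 hxa
  exact mul_nonneg (A_nonneg ha0 ha1 hx (by intro h; nlinarith) hμ) (sq_nonneg _)

end pointwise

noncomputable def Phi1 (a : ℝ) : ℝ → ℝ := fun y =>
  if y = a then a * ((a - 1) / Real.log a)
  else (a - 1) / Real.log a * (y ^ 2 * (Real.log y - Real.log a) / (y - a))

noncomputable def Phi2 (a : ℝ) : ℝ → ℝ := fun y =>
  if y = a then a * ((a - 1) / Real.log a)
  else (a - 1) / Real.log a * (a * (2 * y - a) * (Real.log y - Real.log a) / (y - a))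

section deriv
variable {a x μ : ℝ}

lemma hasDerivAt_Phi1 (ha0 : 0 < a) (ha1 : a < 1) (hx : 0 < x) (hxa : x ≠ a)
    (hμ : μ = a - a * Real.log a) :
    HasDerivAt (Phi1 a) (x * Hb' a μ x + Hb a x) x := by
  have hl := la_neg ha0 ha1
  have hxa' : x - a ≠ 0 := sub_ne_zero.2 hxa
  have hN : HasDerivAt (fun y => y ^ 2 * (Real.log y - Real.log a))
      (2 * x * (Real.log x - Real.log a) + x ^ 2 * x⁻¹) x := by
    have h1 : HasDerivAt (fun y : ℝ => y ^ 2) (2 * x) x := by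
      simpa using hasDerivAt_pow 2 x
    have h2 : HasDerivAt (fun y => Real.log y - Real.log a) x⁻¹ x :=
      (Real.hasDerivAt_log hx.ne').sub_const _
    exact h1.mul h2
  have hD : HasDerivAt (fun y : ℝ => y - a) 1 x := (hasDerivAt_id x).sub_const a
  have h := ((hN.div hD hxa').const_mul ((a - 1) / Real.log a))
  have heq : (a - 1) / Real.log a *
      (((2 * x * (Real.log x - Real.log a) + x ^ 2 * x⁻¹) * (x - a) -
        x ^ 2 * (Real.log x - Real.log a) * 1) / (x - a) ^ 2) =
      x * Hb' a μ x + Hb a x := by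
    have hx0 : x ≠ 0 := hx.ne'
    have hla : Real.log a ≠ 0 := hl.ne
    unfold Hb Hb'
    rw [hμ]
    field_simp
    ring
  rw [heq] at h
  apply h.congr_of_eventuallyEq
  filter_upwards [isOpen_ne.mem_nhds hxa] with y hy
  simp [Phi1, hy]

lemma hasDerivAt_Phi2 (ha0 : 0 < a) (ha1 : a < 1) (hxa : a < x)
    (hμ : μ = a - a * Real.log a) :
    HasDerivAt (Phi2 a) (phiER a μ ((x - a)/x) x) x := by
  have hl := la_neg ha0 ha1
  have hx : (0:ℝ) < x := lt_trans ha0 hxa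
  have hxa' : x - a ≠ 0 := sub_ne_zero.2 (by linarith)
  have hN : HasDerivAt (fun y => a * (2 * y - a) * (Real.log y - Real.log a))
      (a * 2 * (Real.log x - Real.log a) + a * (2 * x - a) * x⁻¹) x := by
    have h1 : HasDerivAt (fun y : ℝ => a * (2 * y - a)) (a * 2) x := by
      simpa using (((hasDerivAt_id x).const_mul 2).sub_const a).const_mul a
    have h2 : HasDerivAt (fun y => Real.log y - Real.log a) x⁻¹ x :=
      (Real.hasDerivAt_log hx.ne').sub_const _
    exact h1.mul h2
  have hD : HasDerivAt (fun y : ℝ => y - a) 1 x := (hasDerivAt_id x).sub_const a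
  have h := ((hN.div hD hxa').const_mul ((a - 1) / Real.log a))
  have heq : (a - 1) / Real.log a *
      (((a * 2 * (Real.log x - Real.log a) + a * (2 * x - a) * x⁻¹) * (x - a) -
        a * (2 * x - a) * (Real.log x - Real.log a) * 1) / (x - a) ^ 2) =
      phiER a μ ((x - a)/x) x := by
    have hx0 : x ≠ 0 := hx.ne'
    have hla : Real.log a ≠ 0 := hl.ne
    unfold phiER Hb Hb'
    rw [hμ]
    field_simp
    ring
  rw [heq] at h
  apply h.congr_of_eventuallyEq
  filter_upwards [isOpen_ne.mem_nhds (show x ≠ a by intro h'; exact hxa' (by rw [h']; ring))]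
    with y hy
  simp [Phi2, hy]

end deriv

section cont
variable {a : ℝ}

lemma tendsto_slope_log (ha0 : 0 < a) :
    Filter.Tendsto (fun y => (Real.log y - Real.log a) / (y - a)) (nhdsWithin a {a}ᶜ)
      (nhds a⁻¹) := by
  have h := hasDerivAt_iff_tendsto_slope.1 (Real.hasDerivAt_log ha0.ne')
  apply h.congr
  intro y
  rw [slope_def_field]

lemma Phi1_val_a : Phi1 a a = a * ((a - 1) / Real.log a) := by simp [Phi1]

lemma Phi2_val_a : Phi2 a a = a * ((a - 1) / Real.log a) := by simp [Phi2]

lemma continuousWithinAt_Phi1_a (ha0 : 0 < a) (ha1 : a < 1) (s : Set ℝ) :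
    ContinuousWithinAt (Phi1 a) s a := by
  have hl := la_neg ha0 ha1
  rw [← continuousWithinAt_diff_self]
  have key : Filter.Tendsto (Phi1 a) (nhdsWithin a {a}ᶜ) (nhds (Phi1 a a)) := by
    have h1 : Filter.Tendsto (fun z : ℝ => z ^ 2) (nhdsWithin a {a}ᶜ) (nhds (a ^ 2)) :=
      Filter.Tendsto.mono_left ((continuous_pow 2).tendsto a) nhdsWithin_le_nhds
    have h2 := (h1.mul (tendsto_slope_log ha0)).const_mul ((a - 1) / Real.log a)
    have e : (a - 1) / Real.log a * (a ^ 2 * a⁻¹) = Phi1 a a := by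
      have h0 : a ≠ 0 := ha0.ne'
      have haa : a ^ 2 * a⁻¹ = a := by rw [sq, mul_assoc, mul_inv_cancel₀ h0, mul_one]
      rw [Phi1_val_a, haa]; ring
    rw [e] at h2
    apply h2.congr'
    filter_upwards [self_mem_nhdsWithin] with z hz
    rw [Phi1, if_neg (by simpa using hz : ¬ z = a), mul_div_assoc]
  exact key.mono_left (nhdsWithin_mono a fun z hz => hz.2)

lemma continuousWithinAt_Phi2_a (ha0 : 0 < a) (ha1 : a < 1) (s : Set ℝ) :
    ContinuousWithinAt (Phi2 a) s a := by
  have hl := la_neg ha0 ha1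
  rw [← continuousWithinAt_diff_self]
  have key : Filter.Tendsto (Phi2 a) (nhdsWithin a {a}ᶜ) (nhds (Phi2 a a)) := by
    have h1 : Filter.Tendsto (fun z : ℝ => a * (2 * z - a)) (nhdsWithin a {a}ᶜ)
        (nhds (a * (2 * a - a))) :=
      Filter.Tendsto.mono_left (Continuous.tendsto (by continuity) a) nhdsWithin_le_nhds
    have h2 := (h1.mul (tendsto_slope_log ha0)).const_mul ((a - 1) / Real.log a)
    have e : (a - 1) / Real.log a * (a * (2 * a - a) * a⁻¹) = Phi2 a a := by
      have h0 : a ≠ 0 := ha0.ne'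
      have haa : a * (2 * a - a) * a⁻¹ = a := by
        rw [show a * (2 * a - a) = a * a by ring, mul_assoc, mul_inv_cancel₀ h0, mul_one]
      rw [Phi2_val_a, haa]; ring
    rw [e] at h2
    apply h2.congr'
    filter_upwards [self_mem_nhdsWithin] with z hz
    rw [Phi2, if_neg (by simpa using hz : ¬ z = a), mul_div_assoc]
  exact key.mono_left (nhdsWithin_mono a fun z hz => hz.2)

lemma continuousOn_Phi1 (ha0 : 0 < a) (ha1 : a < 1) : ContinuousOn (Phi1 a) (Set.Icc 0 a) := by
  have hl := la_neg ha0 ha1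
  intro y hy
  rcases eq_or_lt_of_le hy.1 with h0 | h0
  · -- y = 0
    have key : Filter.Tendsto (fun y => (a - 1) / Real.log a *
        (y ^ 2 * (Real.log y - Real.log a) / (y - a))) (nhdsWithin 0 (Set.Ioi 0)) (nhds 0) := by
      have h1 : Filter.Tendsto (fun y : ℝ => Real.log y * y ^ 2) (nhdsWithin 0 (Set.Ioi 0))
          (nhds 0) := by
        have := tendsto_log_mul_rpow_nhdsGT_zero (r := 2) (by norm_num)
        apply this.congr'
        filter_upwards [self_mem_nhdsWithin] with y hy
        rw [← Real.rpow_natCast y 2]; norm_num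
      have h2 : Filter.Tendsto (fun y : ℝ => Real.log a * y ^ 2) (nhdsWithin 0 (Set.Ioi 0))
          (nhds 0) := by
        have : Filter.Tendsto (fun y : ℝ => y ^ 2) (nhdsWithin 0 (Set.Ioi 0)) (nhds 0) := by
          apply Filter.Tendsto.mono_left _ nhdsWithin_le_nhds
          simpa using (continuous_pow 2).tendsto (0:ℝ)
        simpa using this.const_mul (Real.log a)
      have h3 : Filter.Tendsto (fun y : ℝ => y - a) (nhdsWithin 0 (Set.Ioi 0)) (nhds (-a)) := by
        apply Filter.Tendsto.mono_left _ nhdsWithin_le_nhds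
        simpa using (continuous_sub_right a).tendsto (0:ℝ)
      have h4 := ((h1.sub h2).div h3 (by linarith)).const_mul ((a - 1) / Real.log a)
      simp only [zero_div, mul_zero, zero_sub, div_neg, neg_zero] at h4
      apply h4.congr
      intro y
      simp only [Pi.div_apply]
      ring
    subst h0
    rw [← continuousWithinAt_diff_self]
    have e0 : Phi1 a 0 = 0 := by
      rw [Phi1, if_neg ha0.ne]
      simp
    rw [ContinuousWithinAt, e0]
    have key2 : Filter.Tendsto (Phi1 a) (nhdsWithin 0 (Set.Ioi 0)) (nhds 0) := by
      apply key.congr'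
      filter_upwards [self_mem_nhdsWithin,
        mem_nhdsWithin_of_mem_nhds (Iio_mem_nhds ha0)] with z hz hza
      rw [Phi1, if_neg (ne_of_lt hza)]
    apply key2.mono_left
    apply nhdsWithin_mono
    rintro z ⟨hz1, hz2⟩
    rcases eq_or_lt_of_le hz1.1 with h | h
    · exact absurd h.symm (by simpa using hz2)
    · exact h
  · rcases eq_or_lt_of_le hy.2 with ha' | ha'
    · exact ha' ▸ continuousWithinAt_Phi1_a ha0 ha1 _
    · apply ContinuousAt.continuousWithinAt
      have hne : y ≠ a := ha'.ne
      have : ContinuousAt (fun z => (a - 1) / Real.log a *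
          (z ^ 2 * (Real.log z - Real.log a) / (z - a))) y := by
        apply ContinuousAt.mul continuousAt_const
        apply ContinuousAt.div
        · exact ((continuous_pow 2).continuousAt).mul
            ((Real.continuousAt_log h0.ne').sub continuousAt_const)
        · exact (continuous_id.sub continuous_const).continuousAt
        · exact sub_ne_zero.2 hne
      apply this.congr
      filter_upwards [isOpen_ne.mem_nhds hne] with z hz
      rw [Phi1, if_neg hz]

lemma continuousOn_Phi2 (ha0 : 0 < a) (ha1 : a < 1) : ContinuousOn (Phi2 a) (Set.Icc a 1) := by
  have hl := la_neg ha0 ha1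
  intro y hy
  rcases eq_or_lt_of_le hy.1 with h0 | h0
  · exact h0 ▸ continuousWithinAt_Phi2_a ha0 ha1 _
  · apply ContinuousAt.continuousWithinAt
    have hne : y ≠ a := (h0.ne).symm
    have hy0 : (0:ℝ) < y := lt_trans ha0 h0
    have : ContinuousAt (fun z => (a - 1) / Real.log a *
        (a * (2 * z - a) * (Real.log z - Real.log a) / (z - a))) y := by
      apply ContinuousAt.mul continuousAt_const
      apply ContinuousAt.div
      · exact (Continuous.continuousAt (by continuity)).mul
          ((Real.continuousAt_log hy0.ne').sub continuousAt_const)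
      · exact (continuous_id.sub continuous_const).continuousAt
      · exact sub_ne_zero.2 hne
    apply this.congr
    filter_upwards [isOpen_ne.mem_nhds hne] with z hz
    rw [Phi2, if_neg hz]

end cont

noncomputable def gb (a x : ℝ) : ℝ := if x < 1 then max 0 (1 - a / x) else 1

section gbsec
variable {a x μ : ℝ}

lemma gb_low (ha0 : 0 < a) (hx0 : 0 < x) (hxa : x ≤ a) (hx1 : x < 1) : gb a x = 0 := by
  rw [gb, if_pos hx1, max_eq_left]
  have : 1 ≤ a / x := (one_le_div hx0).2 hxa
  linarith

lemma gb_high (ha0 : 0 < a) (hxa : a ≤ x) (hx1 : x < 1) : gb a x = (x - a) / x := by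
  have hx0 : 0 < x := lt_of_lt_of_le ha0 hxa
  rw [gb, if_pos hx1, max_eq_right]
  · field_simp
  · have : a / x ≤ 1 := (div_le_one hx0).2 hxa
    linarith

lemma gb_mem (ha0 : 0 < a) (hx0 : 0 < x) : gb a x ∈ Set.Icc (0:ℝ) 1 := by
  rw [gb]
  split_ifs with h
  · constructor
    · exact le_max_left _ _
    · apply max_le (by norm_num)
      have : 0 ≤ a / x := le_of_lt (div_pos ha0 hx0)
      linarith
  · exact ⟨zero_le_one, le_refl 1⟩

lemma gb_measurable : Measurable (gb a) := by
  apply Measurable.ite (measurableSet_lt measurable_id measurable_const)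
  · exact measurable_const.max (measurable_const.sub (measurable_const.div measurable_id))
  · exact measurable_const

lemma Hb_measurable : Measurable (Hb a) := by
  unfold Hb
  apply Measurable.div
  · exact (((measurable_id.mul measurable_const).mul
      (Real.measurable_log.sub measurable_const)).neg)
  · exact (measurable_id.sub measurable_const).mul measurable_const

lemma Hb'_measurable : Measurable (Hb' a μ) := by
  unfold Hb'
  apply Measurable.div
  · exact (measurable_const.mul ((measurable_id.sub
      (Real.measurable_log.const_mul a)).sub measurable_const)).neg
  · exact ((measurable_id.sub measurable_const).pow_const 2).mul measurable_const

/-- a.e. x ≠ a on any measure restriction of volume -/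
lemma ae_ne_a (s : Set ℝ) : ∀ᵐ (x : ℝ) ∂(volume.restrict s), x ≠ a := by
  apply ae_restrict_of_ae
  rw [MeasureTheory.ae_iff]
  have : {x : ℝ | ¬ x ≠ a} = {a} := by ext z; simp
  rw [this]
  exact measure_singleton a

lemma phiER_bound (ha0 : 0 < a) (ha1 : a < 1) (hx : 0 < x) (hx1 : x ≤ 1) (hxa : x - a ≠ 0)
    (hμ : μ = a - a * Real.log a) {t : ℝ} (ht0 : 0 ≤ t) (ht1 : t ≤ 1) :
    |phiER a μ t x| ≤ cc a + 3 * (cc a / a) := by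
  have hc := cc_pos ha0 ha1
  have hca : 0 ≤ cc a / a := le_of_lt (div_pos hc ha0)
  have h1 : 0 ≤ Hb a x := Hb_nonneg ha0 ha1 hx
  have h2 : Hb a x ≤ cc a / a := Hb_le_cc_div ha0 ha1 hx hx1
  have h3 : 0 ≤ x * Hb' a μ x := xHb'_nonneg ha0 ha1 hx hxa hμ
  have h4 : x * Hb' a μ x ≤ cc a := xHb'_le ha0 ha1 hx hxa hμ
  have k1 : t * (1 - t) ≤ 1 := by nlinarith
  have k0 : 0 ≤ t * (1 - t) := mul_nonneg ht0 (by linarith)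
  have e1 : 0 ≤ 1 - t ^ 2 := by nlinarith
  have e2 : 1 - t ^ 2 ≤ 1 := by nlinarith
  unfold phiER
  rw [abs_le]
  constructor
  · nlinarith [mul_nonneg e1 (add_nonneg h3 h1),
      mul_le_mul h2 k1 k0 hca]
  · nlinarith [mul_le_mul e2 (add_le_add h4 h2) (add_nonneg h3 h1) (by positivity),
      mul_nonneg (mul_nonneg h1 ht0) (by linarith : 0 ≤ 1 - t)]

lemma phiER_intervalIntegrable (ha0 : 0 < a) (ha1 : a < 1) (hμ : μ = a - a * Real.log a)
    {F : ℝ → ℝ} (hFm : AEStronglyMeasurable F (volume.restrict (Set.Ioc (0:ℝ) 1)))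
    (hFr : ∀ x ∈ Set.Ioc (0:ℝ) 1, F x ∈ Set.Icc (0:ℝ) 1) :
    IntervalIntegrable (fun x => phiER a μ (F x) x) volume 0 1 := by
  rw [intervalIntegrable_iff_integrableOn_Ioc_of_le (by norm_num)]
  constructor
  · have m1 : AEStronglyMeasurable (fun x => x * Hb' a μ x + Hb a x)
        (volume.restrict (Set.Ioc (0:ℝ) 1)) :=
      ((measurable_id.mul (Hb'_measurable)).add Hb_measurable).aestronglyMeasurable
    have m2 : AEStronglyMeasurable (Hb a) (volume.restrict (Set.Ioc (0:ℝ) 1)) :=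
      Hb_measurable.aestronglyMeasurable
    unfold phiER
    apply AEStronglyMeasurable.sub
    · exact (aestronglyMeasurable_const.sub (hFm.pow 2)).mul m1
    · exact ((aestronglyMeasurable_const.mul m2).mul hFm).mul
        (aestronglyMeasurable_const.sub hFm)
  · apply MeasureTheory.HasFiniteIntegral.restrict_of_bounded
      (C := cc a + 3 * (cc a / a)) measure_Ioc_lt_top
    filter_upwards [MeasureTheory.ae_restrict_mem measurableSet_Ioc, ae_ne_a (Set.Ioc 0 1)]
      with x hx hxa
    have hr := hFr x hx
    exact phiER_bound ha0 ha1 hx.1 hx.2 (sub_ne_zero.2 hxa) hμ hr.1 hr.2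

end gbsec

lemma ae_ne' (b : ℝ) : ∀ᵐ x : ℝ, x ≠ b := by
  rw [MeasureTheory.ae_iff]
  have : {x : ℝ | ¬ x ≠ b} = {b} := by ext z; simp
  rw [this]
  exact measure_singleton b

section ftc
variable {a μ : ℝ}

lemma uIcc_sub {c d : ℝ} (h0 : (0:ℝ) ≤ c) (hcd : c ≤ d) (h1 : d ≤ 1) :
    Set.uIcc c d ⊆ Set.uIcc (0:ℝ) 1 := by
  rw [Set.uIcc_of_le hcd, Set.uIcc_of_le (by norm_num : (0:ℝ) ≤ 1)]
  exact Set.Icc_subset_Icc h0 h1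

lemma integral_phiER_gb (ha0 : 0 < a) (ha1 : a < 1) (hμ : μ = a - a * Real.log a) :
    ∫ x in (0:ℝ)..1, phiER a μ (gb a x) x = 2 * a - a ^ 2 := by
  have hl := la_neg ha0 ha1
  have hInt : IntervalIntegrable (fun x => phiER a μ (gb a x) x) volume 0 1 :=
    phiER_intervalIntegrable ha0 ha1 hμ gb_measurable.aestronglyMeasurable
      (fun x hx => gb_mem ha0 hx.1)
  have hI1 : IntervalIntegrable (fun x => phiER a μ (gb a x) x) volume 0 a :=
    hInt.mono_set (uIcc_sub (le_refl 0) ha0.le ha1.le)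
  have hI2 : IntervalIntegrable (fun x => phiER a μ (gb a x) x) volume a 1 :=
    hInt.mono_set (uIcc_sub ha0.le ha1.le (le_refl 1))
  have e1 : ∫ x in (0:ℝ)..a, phiER a μ (gb a x) x = Phi1 a a - Phi1 a 0 := by
    apply intervalIntegral.integral_eq_sub_of_hasDerivAt_of_le ha0.le
      (continuousOn_Phi1 ha0 ha1) _ hI1
    intro x hx
    have hgb : gb a x = 0 := gb_low ha0 hx.1 hx.2.le (lt_trans hx.2 ha1)
    have e : phiER a μ (gb a x) x = x * Hb' a μ x + Hb a x := by
      rw [hgb]; unfold phiER; ring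
    rw [e]
    exact hasDerivAt_Phi1 ha0 ha1 hx.1 (ne_of_lt hx.2) hμ
  have e2 : ∫ x in a..(1:ℝ), phiER a μ (gb a x) x = Phi2 a 1 - Phi2 a a := by
    apply intervalIntegral.integral_eq_sub_of_hasDerivAt_of_le ha1.le
      (continuousOn_Phi2 ha0 ha1) _ hI2
    intro x hx
    have hgb : gb a x = (x - a) / x := gb_high ha0 hx.1.le hx.2
    rw [hgb]
    exact hasDerivAt_Phi2 ha0 ha1 hx.1 hμ
  have v0 : Phi1 a 0 = 0 := by
    rw [Phi1, if_neg ha0.ne]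
    norm_num
  have v1 : Phi2 a 1 = 2 * a - a ^ 2 := by
    have h1a : (1:ℝ) ≠ a := ha1.ne'
    have h1a' : (1:ℝ) - a ≠ 0 := sub_ne_zero.2 h1a
    have hla : Real.log a ≠ 0 := hl.ne
    rw [Phi2, if_neg h1a, Real.log_one]
    field_simp
    ring
  rw [← intervalIntegral.integral_add_adjacent_intervals hI1 hI2, e1, e2, v0, v1,
    Phi1_val_a, Phi2_val_a]
  ring

lemma integral_gb (ha0 : 0 < a) (ha1 : a < 1) :
    ∫ x in (0:ℝ)..1, gb a x = 1 - (a - a * Real.log a) := by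
  have hl := la_neg ha0 ha1
  have e1 : ∫ x in (0:ℝ)..a, gb a x = 0 := by
    rw [intervalIntegral.integral_congr_ae (g := fun _ => (0:ℝ)) ?_, intervalIntegral.integral_zero]
    apply Filter.Eventually.of_forall
    intro x hx
    rw [Set.uIoc_of_le ha0.le] at hx
    exact gb_low ha0 hx.1 hx.2 (lt_of_le_of_lt hx.2 ha1)
  have e2 : ∫ x in a..(1:ℝ), gb a x = (1 - a) - a * (-Real.log a) := by
    have hone : ∫ x in a..(1:ℝ), (1:ℝ) = 1 - a := by simp
    have hdiv : IntervalIntegrable (fun x => a / x) volume a 1 := by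
      apply ContinuousOn.intervalIntegrable
      apply ContinuousOn.div continuousOn_const continuousOn_id
      intro x hx
      rw [Set.uIcc_of_le ha1.le] at hx
      exact ne_of_gt (lt_of_lt_of_le ha0 hx.1)
    have hsub : ∫ x in a..(1:ℝ), (1 - a / x) = (1 - a) - a * (-Real.log a) := by
      rw [intervalIntegral.integral_sub intervalIntegrable_const hdiv, hone]
      have : ∫ x in a..(1:ℝ), a / x = a * (-Real.log a) := by
        have h0 : (0:ℝ) ∉ Set.uIcc a 1 := by
          rw [Set.uIcc_of_le ha1.le]
          rintro ⟨h1, h2⟩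
          exact absurd h1 (not_le.2 ha0)
        have := integral_one_div h0
        calc ∫ x in a..(1:ℝ), a / x = ∫ x in a..(1:ℝ), a * (1 / x) := by
              apply intervalIntegral.integral_congr
              intro x hx; ring
          _ = a * Real.log (1 / a) := by rw [intervalIntegral.integral_const_mul, this]
          _ = a * (-Real.log a) := by rw [one_div, Real.log_inv]
      rw [this]
    rw [← hsub]
    apply intervalIntegral.integral_congr_ae
    filter_upwards [ae_ne' 1] with x hx1 hmem
    rw [Set.uIoc_of_le ha1.le] at hmem
    have hx1' : x < 1 := lt_of_le_of_ne hmem.2 hx1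
    rw [gb_high ha0 hmem.1.le hx1']
    have hx0 : x ≠ 0 := (lt_trans ha0 hmem.1).ne'
    field_simp
  have hgbi : IntervalIntegrable (gb a) volume 0 1 := by
    rw [intervalIntegrable_iff_integrableOn_Ioc_of_le (by norm_num)]
    constructor
    · exact gb_measurable.aestronglyMeasurable
    · apply MeasureTheory.HasFiniteIntegral.restrict_of_bounded (C := 1) measure_Ioc_lt_top
      filter_upwards [MeasureTheory.ae_restrict_mem measurableSet_Ioc] with x hx
      have := gb_mem ha0 hx.1
      rw [Real.norm_eq_abs, abs_le]
      constructor <;> linarith [this.1, this.2]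
  rw [← intervalIntegral.integral_add_adjacent_intervals
    (hgbi.mono_set (uIcc_sub (le_refl 0) ha0.le ha1.le))
    (hgbi.mono_set (uIcc_sub ha0.le ha1.le (le_refl 1))), e1, e2]
  ring

end ftc

/-- For any CDF G on [0,1] with mean μ, the revenue functional
L(G) = ∫₀¹ {(1 - G(x)²)(x·H̄'(x) + H̄(x)) - 2·H̄(x)·G(x)(1-G(x))} dx satisfies
L(G) ≥ L(Ḡ) = 2a - a². -/
theorem revenue_minimized_by_Gbar (μ a : ℝ) (hμ : μ ∈ Set.Ioo (0:ℝ) 1)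
    (ha : a ∈ Set.Ioo (0:ℝ) 1) (haμ : a * (1 - Real.log a) = μ)
    (H H' Gbar : ℝ → ℝ)
    (hH : ∀ x : ℝ, H x =
      if x = 0 then 0
      else if x = a then -(1 - a) / Real.log a
      else -(x * (1 - a) * (Real.log x - Real.log a)) / ((x - a) * Real.log a))
    (hH' : ∀ x : ℝ, x ≠ a →
      H' x = -((1 - a) * (x - a * Real.log x - μ)) / ((x - a) ^ 2 * Real.log a))
    (hGbar : ∀ x : ℝ, Gbar x = if x < 1 then max 0 (1 - a / x) else 1)
    (G : ℝ → ℝ) (hGmono : MonotoneOn G (Set.Icc (0:ℝ) 1))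
    (hGrange : ∀ x ∈ Set.Icc (0:ℝ) 1, G x ∈ Set.Icc (0:ℝ) 1)
    (hG1 : G 1 = 1)
    (hGmean : (∫ x in (0:ℝ)..1, (1 - G x)) = μ) :
    (∫ x in (0:ℝ)..1,
        ((1 - Gbar x ^ 2) * (x * H' x + H x) - 2 * H x * Gbar x * (1 - Gbar x)))
      = 2 * a - a ^ 2 ∧
    (∫ x in (0:ℝ)..1,
        ((1 - Gbar x ^ 2) * (x * H' x + H x) - 2 * H x * Gbar x * (1 - Gbar x)))
      ≤ ∫ x in (0:ℝ)..1,
          ((1 - G x ^ 2) * (x * H' x + H x) - 2 * H x * G x * (1 - G x)) := by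
  obtain ⟨ha0, ha1⟩ := ha
  have hμ2 : μ = a - a * Real.log a := by rw [← haμ]; ring
  have hGbgb : Gbar = gb a := funext fun x => by rw [hGbar x]; rfl
  have hHeq : ∀ x : ℝ, x ≠ a → H x = Hb a x := by
    intro x hxa
    rw [hH x]
    rcases eq_or_ne x 0 with rfl | hx0
    · rw [if_pos rfl]
      simp [Hb]
    · rw [if_neg hx0, if_neg hxa]
      rfl
  have hH'eq : ∀ x : ℝ, x ≠ a → H' x = Hb' a μ x := fun x hx => by rw [hH' x hx]; rfl
  have cong1 : (∫ x in (0:ℝ)..1,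
        ((1 - Gbar x ^ 2) * (x * H' x + H x) - 2 * H x * Gbar x * (1 - Gbar x)))
      = ∫ x in (0:ℝ)..1, phiER a μ (gb a x) x := by
    apply intervalIntegral.integral_congr_ae
    filter_upwards [ae_ne' a] with x hxa _
    rw [hGbgb, hHeq x hxa, hH'eq x hxa]
    rfl
  have cong2 : (∫ x in (0:ℝ)..1,
        ((1 - G x ^ 2) * (x * H' x + H x) - 2 * H x * G x * (1 - G x)))
      = ∫ x in (0:ℝ)..1, phiER a μ (G x) x := by
    apply intervalIntegral.integral_congr_ae
    filter_upwards [ae_ne' a] with x hxa _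
    rw [hHeq x hxa, hH'eq x hxa]
    rfl
  -- measurability of G on (0,1]
  set Gc : ℝ → ℝ := fun x => G (max 0 (min 1 x)) with hGc
  have hGcmono : Monotone Gc := by
    intro x y hxy
    apply hGmono
    · exact ⟨le_max_left _ _, max_le zero_le_one (min_le_left _ _)⟩
    · exact ⟨le_max_left _ _, max_le zero_le_one (min_le_left _ _)⟩
    · exact max_le_max (le_refl 0) (min_le_min (le_refl 1) hxy)
  have hGm : AEStronglyMeasurable G (volume.restrict (Set.Ioc (0:ℝ) 1)) := by
    apply (hGcmono.measurable.aestronglyMeasurable).congr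
    filter_upwards [MeasureTheory.ae_restrict_mem measurableSet_Ioc] with x hx
    rw [hGc]
    simp only
    rw [min_eq_right hx.2, max_eq_right hx.1.le]
  have hIG : IntervalIntegrable (fun x => phiER a μ (G x) x) volume 0 1 :=
    phiER_intervalIntegrable ha0 ha1 hμ2 hGm (fun x hx => hGrange x ⟨hx.1.le, hx.2⟩)
  have hIgb : IntervalIntegrable (fun x => phiER a μ (gb a x) x) volume 0 1 :=
    phiER_intervalIntegrable ha0 ha1 hμ2 gb_measurable.aestronglyMeasurable
      (fun x hx => gb_mem ha0 hx.1)
  have hGint : IntervalIntegrable G volume 0 1 := by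
    rw [intervalIntegrable_iff_integrableOn_Ioc_of_le (by norm_num)]
    refine ⟨hGm, ?_⟩
    apply MeasureTheory.HasFiniteIntegral.restrict_of_bounded (C := 1) measure_Ioc_lt_top
    filter_upwards [MeasureTheory.ae_restrict_mem measurableSet_Ioc] with x hx
    have := hGrange x ⟨hx.1.le, hx.2⟩
    rw [Real.norm_eq_abs, abs_le]
    exact ⟨by linarith [this.1], this.2⟩
  have hgbint : IntervalIntegrable (gb a) volume 0 1 := by
    rw [intervalIntegrable_iff_integrableOn_Ioc_of_le (by norm_num)]
    refine ⟨gb_measurable.aestronglyMeasurable, ?_⟩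
    apply MeasureTheory.HasFiniteIntegral.restrict_of_bounded (C := 1) measure_Ioc_lt_top
    filter_upwards [MeasureTheory.ae_restrict_mem measurableSet_Ioc] with x hx
    have := gb_mem ha0 hx.1
    rw [Real.norm_eq_abs, abs_le]
    exact ⟨by linarith [this.1], this.2⟩
  have hIntG1 : ∫ x in (0:ℝ)..1, G x = 1 - μ := by
    have h1 : (∫ x in (0:ℝ)..1, (1 - G x)) =
        (∫ _ in (0:ℝ)..1, (1:ℝ)) - ∫ x in (0:ℝ)..1, G x :=
      intervalIntegral.integral_sub intervalIntegrable_const hGint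
    have h2 : (∫ _ in (0:ℝ)..1, (1:ℝ)) = 1 := by simp
    rw [h1, h2] at hGmean
    linarith
  have hIntgb1 : ∫ x in (0:ℝ)..1, gb a x = 1 - μ := by
    rw [integral_gb ha0 ha1, hμ2]
  have key : 0 ≤ ∫ x in (0:ℝ)..1,
      (phiER a μ (G x) x - phiER a μ (gb a x) x + 2 * cc a * (G x - gb a x)) := by
    apply intervalIntegral.integral_nonneg_of_ae_restrict (by norm_num : (0:ℝ) ≤ 1)
    filter_upwards [MeasureTheory.ae_restrict_mem measurableSet_Icc,
      MeasureTheory.ae_restrict_of_ae (ae_ne' a),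
      MeasureTheory.ae_restrict_of_ae (ae_ne' 0),
      MeasureTheory.ae_restrict_of_ae (ae_ne' 1)] with x hx hxa hx0 hx1
    have hx0' : 0 < x := lt_of_le_of_ne hx.1 (Ne.symm hx0)
    have hx1' : x < 1 := lt_of_le_of_ne hx.2 hx1
    rcases lt_or_gt_of_ne hxa with h | h
    · rw [gb_low ha0 hx0' h.le hx1']
      exact pointwise_low ha0 ha1 hx0' h hμ2 (hGrange x ⟨hx.1, hx.2⟩).1
    · rw [gb_high ha0 h.le hx1']
      exact pointwise_high ha0 ha1 h hμ2 (G x)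
  rw [intervalIntegral.integral_add (hIG.sub hIgb) ((hGint.sub hgbint).const_mul (2 * cc a)),
    intervalIntegral.integral_sub hIG hIgb, intervalIntegral.integral_const_mul,
    intervalIntegral.integral_sub hGint hgbint, hIntG1, hIntgb1] at key
  constructor
  · rw [cong1, integral_phiER_gb ha0 ha1 hμ2]
  · rw [cong1, cong2]
    have : (1 - μ) - (1 - μ) = 0 := by ring
    rw [this, mul_zero, add_zero] at key
    linarith
end

section
/- The expected revenue in the truth-telling equilibrium of the second-price auction with random reserve H̄ under the equal-revenue distribution Ḡ equals 2a - a². -/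
open Real Filter Set Topology intervalIntegral MeasureTheory

noncomputable def kc (a : ℝ) : ℝ := (a - 1) / Real.log a

noncomputable def rfun (a : ℝ) : ℝ → ℝ := fun x =>
  if x = a then -(1 / (2 * a ^ 2))
  else (Real.log x - Real.log a - (x - a) / a) / (x - a) ^ 2

noncomputable def fcn (a : ℝ) : ℝ → ℝ := fun x =>
  if x ≤ a then kc a * x * (1 / a + (x - 2 * a) * rfun a x)
  else kc a * a / x - kc a * a ^ 2 * rfun a x

noncomputable def Fa (a : ℝ) : ℝ → ℝ := fun x =>
  if x = a then kc a * a
  else if x ≤ a then kc a * (x ^ 2 * (Real.log x - Real.log a)) / (x - a)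
  else kc a * (a * (2 * x - a) * (Real.log x - Real.log a)) / (x - a)

lemma rfun_continuousAt {a : ℝ} (ha0 : 0 < a) {x : ℝ} (hx : 0 < x) :
    ContinuousAt (rfun a) x := by
  rcases eq_or_ne x a with rfl | hne
  · have hslope : Tendsto (fun y => (Real.log y - Real.log x - (y - x) / x) / (y - x) ^ 2)
        (𝓝[≠] x) (𝓝 (-(1 / (2 * x ^ 2)))) := by
      apply HasDerivAt.lhopital_zero_nhdsNE (f' := fun y => y⁻¹ - 1 / x)
        (g' := fun y => 2 * (y - x))
      · filter_upwards [eventually_nhdsWithin_of_eventually_nhds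
          (eventually_gt_nhds hx)] with y hy
        exact ((Real.hasDerivAt_log hy.ne').sub_const _).sub
          (((hasDerivAt_id y).sub_const x).div_const x)
      · filter_upwards with y
        have h := ((hasDerivAt_id y).sub_const x).fun_pow 2
        refine h.congr_deriv ?_
        simp [pow_one]
      · filter_upwards [self_mem_nhdsWithin] with y hy
        exact mul_ne_zero two_ne_zero (sub_ne_zero.2 hy)
      · have hc : ContinuousAt (fun y : ℝ => Real.log y - Real.log x - (y - x) / x) x := by
          exact ((Real.continuousAt_log hx.ne').sub continuousAt_const).sub
            ((continuousAt_id.sub continuousAt_const).div_const x)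
        have := hc.tendsto.mono_left (nhdsWithin_le_nhds (s := {x}ᶜ))
        simpa using this
      · have hc : ContinuousAt (fun y : ℝ => (y - x) ^ 2) x :=
          (continuousAt_id.sub continuousAt_const).pow 2
        have := hc.tendsto.mono_left (nhdsWithin_le_nhds (s := {x}ᶜ))
        simpa using this
      · have hbase : Tendsto (fun y : ℝ => -(1 / (2 * x * y))) (𝓝[≠] x)
            (𝓝 (-(1 / (2 * x * x)))) := by
          have hc : ContinuousAt (fun y : ℝ => -(1 / (2 * x * y))) x := by
            apply ContinuousAt.neg
            apply ContinuousAt.div continuousAt_const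
            · exact continuousAt_const.mul continuousAt_id
            · simpa using mul_ne_zero (mul_ne_zero two_ne_zero hx.ne') hx.ne'
          exact hc.tendsto.mono_left nhdsWithin_le_nhds
        have hbase' : Tendsto (fun y : ℝ => -(1 / (2 * x * y))) (𝓝[≠] x)
            (𝓝 (-(1 / (2 * x ^ 2)))) := by
          convert hbase using 2; ring
        apply hbase'.congr'
        filter_upwards [self_mem_nhdsWithin,
          eventually_nhdsWithin_of_eventually_nhds (eventually_gt_nhds hx)] with y hy hy0
        have h1 : y - x ≠ 0 := sub_ne_zero.2 hy
        field_simp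
        ring
    have hval : rfun x x = -(1 / (2 * x ^ 2)) := by simp [rfun]
    have htend : Tendsto (rfun x) (𝓝[≠] x) (𝓝 (rfun x x)) := by
      rw [hval]
      apply hslope.congr'
      filter_upwards [self_mem_nhdsWithin] with y hy
      exact (if_neg hy).symm
    have hpure : Tendsto (rfun x) (pure x) (𝓝 (rfun x x)) :=
      (tendsto_pure_pure _ _).mono_right (pure_le_nhds _)
    have : Tendsto (rfun x) (𝓝[≠] x ⊔ pure x) (𝓝 (rfun x x)) := htend.sup hpure
    rwa [nhdsNE_sup_pure] at this
  · have hform : ContinuousAt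
        (fun y : ℝ => (Real.log y - Real.log a - (y - a) / a) / (y - a) ^ 2) x := by
      apply ContinuousAt.div
      · exact ((Real.continuousAt_log hx.ne').sub continuousAt_const).sub
          ((continuousAt_id.sub continuousAt_const).div_const a)
      · exact (continuousAt_id.sub continuousAt_const).pow 2
      · exact pow_ne_zero 2 (sub_ne_zero.2 hne)
    apply hform.congr
    filter_upwards [eventually_ne_nhds hne] with y hy
    exact (if_neg hy).symm

lemma rfun_self {a : ℝ} : rfun a a = -(1 / (2 * a ^ 2)) := by simp [rfun]

lemma fcn_continuousOn {a : ℝ} (ha0 : 0 < a) : ContinuousOn (fcn a) (Icc 0 1) := by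
  have hA : ∀ y : ℝ, 0 < y →
      ContinuousAt (fun z : ℝ => kc a * z * (1 / a + (z - 2 * a) * rfun a z)) y :=
    fun y hy => (continuousAt_const.mul continuousAt_id).mul
      (continuousAt_const.add ((continuousAt_id.sub continuousAt_const).mul
        (rfun_continuousAt ha0 hy)))
  have hB : ∀ y : ℝ, 0 < y →
      ContinuousAt (fun z : ℝ => kc a * a / z - kc a * a ^ 2 * rfun a z) y :=
    fun y hy => (continuousAt_const.div continuousAt_id hy.ne').sub
      (continuousAt_const.mul (rfun_continuousAt ha0 hy))
  have hAB : kc a * a * (1 / a + (a - 2 * a) * rfun a a)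
      = kc a * a / a - kc a * a ^ 2 * rfun a a := by
    rw [rfun_self]; field_simp; ring
  intro x hx
  rcases eq_or_ne x 0 with rfl | hx0
  · -- continuity at 0
    rw [← continuousWithinAt_diff_self]
    have hsub : Icc (0:ℝ) 1 \ {0} ⊆ Ioi 0 :=
      fun y hy => lt_of_le_of_ne hy.1.1 (Ne.symm hy.2)
    refine ContinuousWithinAt.mono ?_ hsub
    have hval : fcn a 0 = 0 := by simp [fcn, ha0.le]
    show Tendsto (fcn a) (𝓝[>] (0:ℝ)) (𝓝 (fcn a 0))
    rw [hval]
    have T0 : Tendsto (fun y : ℝ => Real.log y * y) (𝓝[>] (0:ℝ)) (𝓝 0) := by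
      simpa using tendsto_log_mul_rpow_nhdsGT_zero one_pos
    have t1 : Tendsto (fun y : ℝ => kc a * y / a) (𝓝[>] (0:ℝ)) (𝓝 0) := by
      have : ContinuousAt (fun y : ℝ => kc a * y / a) 0 :=
        (continuousAt_const.mul continuousAt_id).div_const a
      have := this.tendsto.mono_left (nhdsWithin_le_nhds (s := Ioi (0:ℝ)))
      simpa using this
    have t2 : Tendsto (fun y : ℝ => kc a * (y - 2 * a) / (y - a) ^ 2) (𝓝[>] (0:ℝ))
        (𝓝 (kc a * (0 - 2 * a) / (0 - a) ^ 2)) := by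
      have : ContinuousAt (fun y : ℝ => kc a * (y - 2 * a) / (y - a) ^ 2) 0 := by
        apply ContinuousAt.div
        · exact continuousAt_const.mul (continuousAt_id.sub continuousAt_const)
        · exact (continuousAt_id.sub continuousAt_const).pow 2
        · simpa using pow_ne_zero 2 (sub_ne_zero.2 (ha0.ne))
      exact this.tendsto.mono_left (nhdsWithin_le_nhds (s := Ioi (0:ℝ)))
    have t3 : Tendsto (fun y : ℝ => Real.log y * y - Real.log a * y - y * (y - a) / a)
        (𝓝[>] (0:ℝ)) (𝓝 0) := by
      have t3a : Tendsto (fun y : ℝ => Real.log a * y) (𝓝[>] (0:ℝ)) (𝓝 0) := by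
        have : ContinuousAt (fun y : ℝ => Real.log a * y) 0 :=
          continuousAt_const.mul continuousAt_id
        have := this.tendsto.mono_left (nhdsWithin_le_nhds (s := Ioi (0:ℝ)))
        simpa using this
      have t3b : Tendsto (fun y : ℝ => y * (y - a) / a) (𝓝[>] (0:ℝ)) (𝓝 0) := by
        have : ContinuousAt (fun y : ℝ => y * (y - a) / a) 0 :=
          (continuousAt_id.mul (continuousAt_id.sub continuousAt_const)).div_const a
        have := this.tendsto.mono_left (nhdsWithin_le_nhds (s := Ioi (0:ℝ)))
        simpa using this
      simpa using (T0.sub t3a).sub t3b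
    have key := t1.add (t2.mul t3)
    rw [mul_zero, add_zero] at key
    apply key.congr'
    filter_upwards [self_mem_nhdsWithin,
      eventually_nhdsWithin_of_eventually_nhds (eventually_lt_nhds ha0)] with y hy0 hya
    have hy0' : (0:ℝ) < y := hy0
    have hsub : y - a ≠ 0 := sub_ne_zero.2 (ne_of_lt hya)
    have : fcn a y = kc a * y * (1 / a +
        (y - 2 * a) * ((Real.log y - Real.log a - (y - a) / a) / (y - a) ^ 2)) := by
      rw [fcn]; rw [if_pos hya.le, rfun, if_neg (ne_of_lt hya)]
    rw [this]
    field_simp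
  · have hxpos : (0:ℝ) < x := lt_of_le_of_ne hx.1 (Ne.symm hx0)
    apply ContinuousAt.continuousWithinAt
    rcases eq_or_ne x a with rfl | hxa
    · -- at a
      have h1 : ContinuousWithinAt (fcn x) (Iic x) x := by
        apply ((hA x hxpos).continuousWithinAt).congr
        · intro y hy; exact if_pos hy
        · exact if_pos le_rfl
      have h2 : ContinuousWithinAt (fcn x) (Ici x) x := by
        apply ((hB x hxpos).continuousWithinAt).congr
        · intro y hy
          rcases eq_or_ne y x with rfl | hyx
          · exact (if_pos le_rfl).trans hAB
          · exact if_neg (not_le.2 (lt_of_le_of_ne hy (Ne.symm hyx)))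
        · exact (if_pos le_rfl).trans hAB
      have := h1.union h2
      rw [Iic_union_Ici] at this
      exact (continuousWithinAt_univ _ _).mp this
    · rcases lt_or_gt_of_ne hxa with h | h
      · apply (hA x hxpos).congr
        filter_upwards [eventually_lt_nhds h] with y hy
        exact (if_pos hy.le).symm
      · apply (hB x hxpos).congr
        filter_upwards [eventually_gt_nhds h] with y hy
        exact (if_neg (not_le.2 hy)).symm

lemma Fa_zero {a : ℝ} (ha0 : 0 < a) : Fa a 0 = 0 := by
  rw [Fa]
  rw [if_neg ha0.ne, if_pos ha0.le]
  simp

lemma Fa_self {a : ℝ} : Fa a a = kc a * a := if_pos rfl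

lemma Fa_continuousOn {a : ℝ} (ha0 : 0 < a) (ha1 : a < 1) :
    ContinuousOn (Fa a) (Icc 0 1) := by
  intro x hx
  rcases eq_or_ne x 0 with rfl | hx0
  · -- at 0
    rw [← continuousWithinAt_diff_self]
    refine ContinuousWithinAt.mono ?_
      (fun y hy => lt_of_le_of_ne hy.1.1 (Ne.symm hy.2) : Icc (0:ℝ) 1 \ {0} ⊆ Ioi 0)
    show Tendsto (Fa a) (𝓝[>] (0:ℝ)) (𝓝 (Fa a 0))
    rw [Fa_zero ha0]
    have T0 : Tendsto (fun y : ℝ => Real.log y * y) (𝓝[>] (0:ℝ)) (𝓝 0) := by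
      simpa using tendsto_log_mul_rpow_nhdsGT_zero one_pos
    have t2 : Tendsto (fun y : ℝ => kc a / (y - a)) (𝓝[>] (0:ℝ)) (𝓝 (kc a / (0 - a))) := by
      have : ContinuousAt (fun y : ℝ => kc a / (y - a)) 0 :=
        continuousAt_const.div (continuousAt_id.sub continuousAt_const)
          (by simpa using sub_ne_zero.2 ha0.ne)
      exact this.tendsto.mono_left (nhdsWithin_le_nhds (s := Ioi (0:ℝ)))
    have t3 : Tendsto (fun y : ℝ => Real.log y * y * y - Real.log a * y ^ 2)
        (𝓝[>] (0:ℝ)) (𝓝 0) := by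
      have tid : Tendsto (fun y : ℝ => y) (𝓝[>] (0:ℝ)) (𝓝 0) := by
        have := (continuousAt_id (x := (0:ℝ))).tendsto.mono_left
          (nhdsWithin_le_nhds (s := Ioi (0:ℝ)))
        exact this
      have t3a : Tendsto (fun y : ℝ => Real.log a * y ^ 2) (𝓝[>] (0:ℝ)) (𝓝 0) := by
        have : ContinuousAt (fun y : ℝ => Real.log a * y ^ 2) 0 :=
          continuousAt_const.mul (continuousAt_id.pow 2)
        have := this.tendsto.mono_left (nhdsWithin_le_nhds (s := Ioi (0:ℝ)))
        simpa using this
      simpa using (T0.mul tid).sub t3a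
    have key := t2.mul t3
    rw [mul_zero] at key
    apply key.congr'
    filter_upwards [self_mem_nhdsWithin,
      eventually_nhdsWithin_of_eventually_nhds (eventually_lt_nhds ha0)] with y hy0 hya
    have hy0' : (0:ℝ) < y := hy0
    have hsub : y - a ≠ 0 := sub_ne_zero.2 (ne_of_lt hya)
    have : Fa a y = kc a * (y ^ 2 * (Real.log y - Real.log a)) / (y - a) := by
      rw [Fa, if_neg (ne_of_lt hya), if_pos hya.le]
    rw [this]
    ring
  · have hxpos : (0:ℝ) < x := lt_of_le_of_ne hx.1 (Ne.symm hx0)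
    rcases eq_or_ne x a with rfl | hxa
    · -- at a : slopes from both sides
      have hsl : Tendsto (slope Real.log x) (𝓝[≠] x) (𝓝 x⁻¹) :=
        hasDerivAt_iff_tendsto_slope.mp (Real.hasDerivAt_log hxpos.ne')
      have hvL : kc x * x ^ 2 * x⁻¹ = kc x * x := by field_simp
      have tendL : Tendsto (Fa x) (𝓝[<] x) (𝓝 (kc x * x)) := by
        have hbase : Tendsto (fun y => kc x * y ^ 2 * slope Real.log x y) (𝓝[<] x)
            (𝓝 (kc x * x ^ 2 * x⁻¹)) := by
          have h1 : Tendsto (fun y : ℝ => kc x * y ^ 2) (𝓝[<] x) (𝓝 (kc x * x ^ 2)) :=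
            (continuousAt_const.mul (continuousAt_id.pow 2)).tendsto.mono_left
              (nhdsWithin_le_nhds (s := Iio x))
          exact h1.mul (hsl.mono_left (nhdsWithin_mono x (fun y hy => ne_of_lt hy)))
        rw [hvL] at hbase
        apply hbase.congr'
        filter_upwards [self_mem_nhdsWithin,
          eventually_nhdsWithin_of_eventually_nhds (eventually_gt_nhds hxpos)] with y hy hy0
        have hy' : y < x := hy
        rw [slope_def_field, Fa, if_neg (ne_of_lt hy'), if_pos hy'.le]
        ring
      have tendR : Tendsto (Fa x) (𝓝[>] x) (𝓝 (kc x * x)) := by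
        have hvR : kc x * (x * (2 * x - x)) * x⁻¹ = kc x * x := by field_simp; ring
        have hbase : Tendsto (fun y => kc x * (x * (2 * y - x)) * slope Real.log x y) (𝓝[>] x)
            (𝓝 (kc x * (x * (2 * x - x)) * x⁻¹)) := by
          have h1 : Tendsto (fun y : ℝ => kc x * (x * (2 * y - x))) (𝓝[>] x)
              (𝓝 (kc x * (x * (2 * x - x)))) :=
            (continuousAt_const.mul (continuousAt_const.mul
              ((continuousAt_id.const_mul 2).sub continuousAt_const))).tendsto.mono_left
              (nhdsWithin_le_nhds (s := Ioi x))
          exact h1.mul (hsl.mono_left (nhdsWithin_mono x (fun y hy => ne_of_gt hy)))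
        rw [hvR] at hbase
        apply hbase.congr'
        filter_upwards [self_mem_nhdsWithin] with y hy
        have hy' : x < y := hy
        rw [slope_def_field, Fa, if_neg (ne_of_gt hy'), if_neg (not_le.2 hy')]
        ring
      have h1 : ContinuousWithinAt (Fa x) (Iic x) x := by
        rw [← continuousWithinAt_diff_self]
        have hIio : Iic x \ {x} = Iio x := by ext y; simp [lt_iff_le_and_ne]
        rw [hIio]
        show Tendsto (Fa x) (𝓝[<] x) (𝓝 (Fa x x))
        rw [Fa_self]; exact tendL
      have h2 : ContinuousWithinAt (Fa x) (Ici x) x := by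
        rw [← continuousWithinAt_diff_self]
        have hIoi : Ici x \ {x} = Ioi x := by ext y; simp [lt_iff_le_and_ne, eq_comm]
        rw [hIoi]
        show Tendsto (Fa x) (𝓝[>] x) (𝓝 (Fa x x))
        rw [Fa_self]; exact tendR
      have := h1.union h2
      rw [Iic_union_Ici] at this
      exact this.mono (subset_univ _)
    · apply ContinuousAt.continuousWithinAt
      rcases lt_or_gt_of_ne hxa with h | h
      · have hc : ContinuousAt
            (fun y : ℝ => kc a * (y ^ 2 * (Real.log y - Real.log a)) / (y - a)) x := by
          apply ContinuousAt.div
          · exact continuousAt_const.mul ((continuousAt_id.pow 2).mul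
              ((Real.continuousAt_log hxpos.ne').sub continuousAt_const))
          · exact continuousAt_id.sub continuousAt_const
          · exact sub_ne_zero.2 hxa
        apply hc.congr
        filter_upwards [eventually_lt_nhds h] with y hy
        rw [Fa, if_neg (ne_of_lt hy), if_pos hy.le]
      · have hc : ContinuousAt
            (fun y : ℝ => kc a * (a * (2 * y - a) * (Real.log y - Real.log a)) / (y - a)) x := by
          apply ContinuousAt.div
          · exact continuousAt_const.mul ((continuousAt_const.mul
              ((continuousAt_id.const_mul 2).sub continuousAt_const)).mul
              ((Real.continuousAt_log hxpos.ne').sub continuousAt_const))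
          · exact continuousAt_id.sub continuousAt_const
          · exact sub_ne_zero.2 hxa
        apply hc.congr
        filter_upwards [eventually_gt_nhds h] with y hy
        rw [Fa, if_neg (ne_of_gt hy), if_neg (not_le.2 hy)]

lemma Fa_deriv_left {a : ℝ} (ha0 : 0 < a) (hL : Real.log a ≠ 0) {x : ℝ}
    (hx : x ∈ Ioo (0:ℝ) a) : HasDerivAt (Fa a) (fcn a x) x := by
  obtain ⟨hx0, hxa⟩ := hx
  have hxa' : x ≠ a := ne_of_lt hxa
  have hsub : x - a ≠ 0 := sub_ne_zero.2 hxa'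
  have hp : HasDerivAt (fun y : ℝ => y ^ 2) (2 * x) x := by simpa using hasDerivAt_pow 2 x
  have hl : HasDerivAt (fun y : ℝ => Real.log y - Real.log a) x⁻¹ x :=
    (Real.hasDerivAt_log hx0.ne').sub_const _
  have h1 : HasDerivAt (fun y : ℝ => kc a * (y ^ 2 * (Real.log y - Real.log a)))
      (kc a * (2 * x * (Real.log x - Real.log a) + x ^ 2 * x⁻¹)) x :=
    (hp.mul hl).const_mul (kc a)
  have h2 : HasDerivAt (fun y : ℝ => y - a) 1 x := (hasDerivAt_id x).sub_const a
  have h3 := h1.fun_div h2 hsub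
  have heq : (fun y : ℝ => Fa a y) =ᶠ[𝓝 x]
      (fun y : ℝ => kc a * (y ^ 2 * (Real.log y - Real.log a)) / (y - a)) := by
    filter_upwards [eventually_lt_nhds hxa] with y hy
    rw [Fa, if_neg (ne_of_lt hy), if_pos hy.le]
  refine HasDerivAt.congr_of_eventuallyEq ?_ heq
  refine h3.congr_deriv ?_
  rw [fcn, if_pos hxa.le, rfun, if_neg hxa', kc]
  field_simp
  ring

lemma Fa_deriv_right {a : ℝ} (ha0 : 0 < a) (hL : Real.log a ≠ 0) {x : ℝ}
    (hx : x ∈ Ioo a 1) : HasDerivAt (Fa a) (fcn a x) x := by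
  obtain ⟨hxa, hx1⟩ := hx
  have hx0 : (0:ℝ) < x := ha0.trans hxa
  have hxa' : x ≠ a := ne_of_gt hxa
  have hsub : x - a ≠ 0 := sub_ne_zero.2 hxa'
  have hq : HasDerivAt (fun y : ℝ => a * (2 * y - a)) (a * 2) x := by
    have := ((hasDerivAt_id x).const_mul 2).sub_const a
    simpa using this.const_mul a
  have hl : HasDerivAt (fun y : ℝ => Real.log y - Real.log a) x⁻¹ x :=
    (Real.hasDerivAt_log hx0.ne').sub_const _
  have h1 : HasDerivAt (fun y : ℝ => kc a * (a * (2 * y - a) * (Real.log y - Real.log a)))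
      (kc a * (a * 2 * (Real.log x - Real.log a) + a * (2 * x - a) * x⁻¹)) x :=
    (hq.mul hl).const_mul (kc a)
  have h2 : HasDerivAt (fun y : ℝ => y - a) 1 x := (hasDerivAt_id x).sub_const a
  have h3 := h1.fun_div h2 hsub
  have heq : (fun y : ℝ => Fa a y) =ᶠ[𝓝 x]
      (fun y : ℝ => kc a * (a * (2 * y - a) * (Real.log y - Real.log a)) / (y - a)) := by
    filter_upwards [eventually_gt_nhds hxa] with y hy
    rw [Fa, if_neg (ne_of_gt hy), if_neg (not_le.2 hy)]
  refine HasDerivAt.congr_of_eventuallyEq ?_ heq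
  refine h3.congr_deriv ?_
  rw [fcn, if_neg (not_le.2 hxa), rfun, if_neg hxa', kc]
  field_simp
  ring

lemma integral_fcn {a : ℝ} (ha0 : 0 < a) (ha1 : a < 1) :
    ∫ x in (0:ℝ)..1, fcn a x = 2 * a - a ^ 2 := by
  have hL : Real.log a ≠ 0 := (Real.log_neg ha0 ha1).ne
  have hcont := Fa_continuousOn ha0 ha1
  have hfc := fcn_continuousOn (a := a) ha0
  have hint1 : IntervalIntegrable (fcn a) volume 0 a := by
    apply ContinuousOn.intervalIntegrable
    rw [uIcc_of_le ha0.le]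
    exact hfc.mono (Icc_subset_Icc le_rfl ha1.le)
  have hint2 : IntervalIntegrable (fcn a) volume a 1 := by
    apply ContinuousOn.intervalIntegrable
    rw [uIcc_of_le ha1.le]
    exact hfc.mono (Icc_subset_Icc ha0.le le_rfl)
  have I1 : ∫ x in (0:ℝ)..a, fcn a x = Fa a a - Fa a 0 :=
    integral_eq_sub_of_hasDerivAt_of_le ha0.le
      (hcont.mono (Icc_subset_Icc le_rfl ha1.le))
      (fun x hx => Fa_deriv_left ha0 hL hx) hint1
  have I2 : ∫ x in a..(1:ℝ), fcn a x = Fa a 1 - Fa a a :=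
    integral_eq_sub_of_hasDerivAt_of_le ha1.le
      (hcont.mono (Icc_subset_Icc ha0.le le_rfl))
      (fun x hx => Fa_deriv_right ha0 hL hx) hint2
  have hsum := integral_add_adjacent_intervals hint1 hint2
  rw [I1, I2] at hsum
  rw [← hsum, Fa_zero ha0]
  have hFa1 : Fa a 1 = 2 * a - a ^ 2 := by
    rw [Fa, if_neg ha1.ne', if_neg (not_le.2 ha1), Real.log_one, kc]
    have h1a : (1:ℝ) - a ≠ 0 := sub_ne_zero.2 ha1.ne'
    field_simp
    ring
  rw [hFa1]
  ring

/-- The expected revenue in the truth-telling equilibrium of the second-price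
auction with random reserve H̄ under the equal-revenue distribution Ḡ equals
2a - a², computed via
∫₀¹ {(1 - Ḡ(x)²)(x·H̄'(x) + H̄(x)) - 2·H̄(x)·Ḡ(x)(1 - Ḡ(x))} dx = 2a - a². -/
theorem expected_revenue_value (μ a : ℝ) (hμ : μ ∈ Set.Ioo (0:ℝ) 1)
    (ha : a ∈ Set.Ioo (0:ℝ) 1) (haμ : a * (1 - Real.log a) = μ)
    (H H' Gbar : ℝ → ℝ)
    (hH : ∀ x : ℝ, H x =
      if x = 0 then 0
      else if x = a then -(1 - a) / Real.log a
      else -(x * (1 - a) * (Real.log x - Real.log a)) / ((x - a) * Real.log a))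
    (hH' : ∀ x : ℝ, x ≠ a →
      H' x = -((1 - a) * (x - a * Real.log x - μ)) / ((x - a) ^ 2 * Real.log a))
    (hGbar : ∀ x : ℝ, Gbar x = if x < 1 then max 0 (1 - a / x) else 1) :
    (∫ x in (0:ℝ)..1,
        ((1 - Gbar x ^ 2) * (x * H' x + H x) - 2 * H x * Gbar x * (1 - Gbar x)))
      = 2 * a - a ^ 2 := by
  obtain ⟨ha0, ha1⟩ := ha
  have hL : Real.log a ≠ 0 := (Real.log_neg ha0 ha1).ne
  have hae_a : ∀ᵐ x : ℝ, x ≠ a := by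
    rw [ae_iff]
    simp only [not_not, Set.setOf_eq_eq_singleton]
    exact Real.volume_singleton
  have hae_1 : ∀ᵐ x : ℝ, x ≠ (1:ℝ) := by
    rw [ae_iff]
    simp only [not_not, Set.setOf_eq_eq_singleton]
    exact Real.volume_singleton
  rw [← integral_fcn ha0 ha1]
  apply intervalIntegral.integral_congr_ae
  filter_upwards [hae_a, hae_1] with x hxa hx1 hx
  rw [Set.uIoc_of_le (by norm_num : (0:ℝ) ≤ 1)] at hx
  obtain ⟨hx0, hxle⟩ := hx
  have hxlt1 : x < 1 := lt_of_le_of_ne hxle hx1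
  have hGx : Gbar x = max 0 (1 - a / x) := by rw [hGbar x, if_pos hxlt1]
  have hsub : x - a ≠ 0 := sub_ne_zero.2 hxa
  rcases lt_or_gt_of_ne hxa with hlt | hgt
  · have hg0 : Gbar x = 0 := by
      rw [hGx, max_eq_left]
      have h1 : (1:ℝ) ≤ a / x := (one_le_div hx0).2 hlt.le
      linarith
    rw [hg0, hH x, hH' x hxa, if_neg hx0.ne', if_neg hxa, ← haμ,
      fcn, if_pos hlt.le, rfun, if_neg hxa, kc]
    field_simp
    ring
  · have hg : Gbar x = 1 - a / x := by
      rw [hGx, max_eq_right]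
      have h1 : a / x < 1 := (div_lt_one hx0).2 hgt
      linarith
    rw [hg, hH x, hH' x hxa, if_neg hx0.ne', if_neg hxa, ← haμ,
      fcn, if_neg (not_le.2 hgt), rfun, if_neg hxa, kc]
    field_simp
    ring
end
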